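/- Let π be an irreducible ψ-generic representation of the quasi-split non-split group SO_{2l} with normalized Bessel function B_{π,ψ}. If B_{π,ψ}(t) ≠ 0 for some t ∈ T, then t lies in the center of SO_{2l}, i.e. t = I_{2l} or t = −I_{2l}. -/

import Mathlib

open scoped MatrixGroups
open Matrix

noncomputable section

namespace ConverseSO

open Classical in
/-- Evaluate a function defined on `G` at a point of `M` through the (typically injective)
map `c : G → M`, extending by zero. -/
def matFun {G M R : Type*} [Zero R] (c : G → M) (φ : G → R) (m : M) : R :=
  if h : ∃ g, c g = m then φ h.choose else 0

variable (F : Type) [Field F] [Fintype F]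

/-- The antidiagonal matrix `J_m`. -/
def Jmat (m : ℕ) : Matrix (Fin m) (Fin m) F :=
  Matrix.of fun i j => if (i : ℕ) + (j : ℕ) + 1 = m then 1 else 0

/-- The middle-block modification `diag(I_{l-1}, [[0,1],[-ρ,0]], I_{l-1})`. -/
def Dmat (l : ℕ) (ρ : F) : Matrix (Fin (2*l)) (Fin (2*l)) F :=
  Matrix.of fun i j =>
    if (i : ℕ) = l - 1 ∧ (j : ℕ) = l then 1
    else if (i : ℕ) = l ∧ (j : ℕ) = l - 1 then -ρ
    else if i = j ∧ (i : ℕ) ≠ l - 1 ∧ (i : ℕ) ≠ l then 1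
    else 0

/-- `J_{2l,ρ}`. -/
def Jrho (l : ℕ) (ρ : F) : Matrix (Fin (2*l)) (Fin (2*l)) F := Dmat F l ρ * Jmat F (2*l)

/-- The matrix-level special orthogonal "set" attached to a matrix `Jm`. -/
def SOset (m : ℕ) (Jm : Matrix (Fin m) (Fin m) F) : Set (Matrix (Fin m) (Fin m) F) :=
  {g | g.det = 1 ∧ gᵀ * Jm * g = Jm}

/-- The special orthogonal group attached to a matrix `Jm`, as a subgroup of `GL`. -/
def SOgrp (m : ℕ) (Jm : Matrix (Fin m) (Fin m) F) : Subgroup (GL (Fin m) F) where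
  carrier := {g | ((g : Matrix (Fin m) (Fin m) F)).det = 1 ∧
    ((g : Matrix (Fin m) (Fin m) F))ᵀ * Jm * ((g : Matrix (Fin m) (Fin m) F)) = Jm}
  one_mem' := ⟨by simp, by simp⟩
  mul_mem' := by
    rintro a b ⟨ha1, ha2⟩ ⟨hb1, hb2⟩
    refine ⟨by rw [Units.val_mul, Matrix.det_mul, ha1, hb1, one_mul], ?_⟩
    have hab : ((a * b : GL (Fin m) F) : Matrix (Fin m) (Fin m) F)
        = (a : Matrix (Fin m) (Fin m) F) * (b : Matrix (Fin m) (Fin m) F) := Units.val_mul a b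
    rw [hab, Matrix.transpose_mul]
    calc (b : Matrix (Fin m) (Fin m) F)ᵀ * (a : Matrix (Fin m) (Fin m) F)ᵀ * Jm *
          ((a : Matrix (Fin m) (Fin m) F) * (b : Matrix (Fin m) (Fin m) F))
        = (b : Matrix (Fin m) (Fin m) F)ᵀ *
            ((a : Matrix (Fin m) (Fin m) F)ᵀ * Jm * (a : Matrix (Fin m) (Fin m) F)) *
            (b : Matrix (Fin m) (Fin m) F) := by
          simp only [mul_assoc]
      _ = Jm := by rw [ha2, hb2]
  inv_mem' := by
    intro g hg
    obtain ⟨h1, h2⟩ := hg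
    have hv1 : ((g⁻¹ : GL (Fin m) F) : Matrix (Fin m) (Fin m) F) * (g : Matrix (Fin m) (Fin m) F)
        = 1 := by rw [← Units.val_mul, inv_mul_cancel, Units.val_one]
    have hv2 : (g : Matrix (Fin m) (Fin m) F) * ((g⁻¹ : GL (Fin m) F) : Matrix (Fin m) (Fin m) F)
        = 1 := by rw [← Units.val_mul, mul_inv_cancel, Units.val_one]
    constructor
    · have hd := congrArg Matrix.det hv1
      rw [Matrix.det_mul, h1, mul_one, Matrix.det_one] at hd
      exact hd
    · calc ((g⁻¹ : GL (Fin m) F) : Matrix (Fin m) (Fin m) F)ᵀ * Jm *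
            ((g⁻¹ : GL (Fin m) F) : Matrix (Fin m) (Fin m) F)
          = ((g⁻¹ : GL (Fin m) F) : Matrix (Fin m) (Fin m) F)ᵀ *
              ((g : Matrix (Fin m) (Fin m) F)ᵀ * Jm * (g : Matrix (Fin m) (Fin m) F)) *
              ((g⁻¹ : GL (Fin m) F) : Matrix (Fin m) (Fin m) F) := by rw [h2]
        _ = ((g : Matrix (Fin m) (Fin m) F) *
              ((g⁻¹ : GL (Fin m) F) : Matrix (Fin m) (Fin m) F))ᵀ * Jm *
              ((g : Matrix (Fin m) (Fin m) F) *
              ((g⁻¹ : GL (Fin m) F) : Matrix (Fin m) (Fin m) F)) := by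
            rw [Matrix.transpose_mul]; simp only [mul_assoc]
        _ = Jm := by rw [hv2]; simp

/-- The quasi-split even special orthogonal group `SO_{2l}` attached to `J_{2l,ρ}`. -/
abbrev SO2l (l : ℕ) (ρ : F) : Subgroup (GL (Fin (2*l)) F) := SOgrp F (2*l) (Jrho F l ρ)

/-- The odd special orthogonal group `SO_{2m+1}` (split form). -/
abbrev SOodd (m : ℕ) : Subgroup (GL (Fin (2*m+1)) F) := SOgrp F (2*m+1) (Jmat F (2*m+1))

/-- The underlying matrix of an element of a special orthogonal group. -/
def mat {m : ℕ} {Jm : Matrix (Fin m) (Fin m) F} (g : SOgrp F m Jm) :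
    Matrix (Fin m) (Fin m) F :=
  ((g : GL (Fin m) F) : Matrix (Fin m) (Fin m) F)

/-- Upper triangular unipotent predicate for matrices. -/
def upUnip {m : ℕ} (M : Matrix (Fin m) (Fin m) F) : Prop :=
  ∀ i j : Fin m, (j : ℕ) ≤ (i : ℕ) → M i j = if i = j then 1 else 0

/-- The upper triangular unipotent subgroup (as a set) of `SO_{2l}`. -/
def USet (l : ℕ) (ρ : F) : Set (SO2l F l ρ) := {u | upUnip F (mat F u)}

/-- The upper triangular unipotent matrices in `SO_{2m+1}` (matrix level). -/
def UoddMatSet (m : ℕ) : Set (Matrix (Fin (2*m+1)) (Fin (2*m+1)) F) :=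
  {g | g ∈ SOset F (2*m+1) (Jmat F (2*m+1)) ∧ upUnip F g}

/-- The generic character of the upper unipotent subgroup of `SO_{2l}`:
`ψ(u_{1,2} + ⋯ + u_{l-2,l-1} + (1/2)·u_{l-1,l+1})` (1-indexed). -/
def psiU (l : ℕ) (ψ : AddChar F ℂ) (M : Matrix (Fin (2*l)) (Fin (2*l)) F) : ℂ :=
  ψ (∑ i : Fin (2*l), ∑ j : Fin (2*l),
    (if (j : ℕ) = (i : ℕ) + 1 ∧ (i : ℕ) + 3 ≤ l then M i j
     else if (i : ℕ) + 2 = l ∧ (j : ℕ) = l then (2 : F)⁻¹ * M i j else 0))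

/-- The sum `u_{1,2} + ⋯ + u_{n-1,n}` for an `n × n` matrix. -/
def glUSum (n : ℕ) (M : Matrix (Fin n) (Fin n) F) : F :=
  ∑ i : Fin n, ∑ j : Fin n, (if (j : ℕ) = (i : ℕ) + 1 then M i j else 0)

/-- The character `ψ_γ` of `N^{l-n}`:
`ψ(Σ_{i=1}^{l-n-1} v_{i,i+1} + (1/2)·v_{l-n-1,l+1})` (1-indexed). -/
def psiGam (l n : ℕ) (ψ : AddChar F ℂ) (M : Matrix (Fin (2*l)) (Fin (2*l)) F) : ℂ :=
  ψ (∑ i : Fin (2*l), ∑ j : Fin (2*l),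
    (if (j : ℕ) = (i : ℕ) + 1 ∧ (i : ℕ) + 2 + n ≤ l then M i j
     else if (i : ℕ) + 2 + n = l ∧ (j : ℕ) = l then (2 : F)⁻¹ * M i j else 0))

/-- Irreducibility of a representation. -/
def IsIrrep {G V : Type*} [Group G] [AddCommGroup V] [Module ℂ V]
    (π : Representation ℂ G V) : Prop :=
  (∃ v : V, v ≠ 0) ∧
    ∀ W : Submodule ℂ V, (∀ g : G, ∀ v ∈ W, π g v ∈ W) → W = ⊥ ∨ W = ⊤

/-- Block index function determined by a set `C` of cuts (and their mirrors) for `SO_{2l}`. -/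
def blkCut (l : ℕ) (C : Finset ℕ) (i : ℕ) : ℕ :=
  (C.filter (fun c => c ≤ i)).card + (C.filter (fun c => 2*l - c ≤ i)).card

/-- The unipotent radical of the standard parabolic subgroup of `SO_{2l}` given by cuts `C`. -/
def cuspUnip (l : ℕ) (ρ : F) (C : Finset ℕ) : Set (SO2l F l ρ) :=
  {g | ∀ i j : Fin (2*l), blkCut l C (j : ℕ) ≤ blkCut l C (i : ℕ) →
    mat F g i j = if i = j then 1 else 0}

/-- Cuspidality: the full unipotent-radical sums vanish for every proper standard parabolic. -/
def IsCuspidal (l : ℕ) (ρ : F) {V : Type*} [AddCommGroup V] [Module ℂ V]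
    (π : Representation ℂ (SO2l F l ρ) V) : Prop :=
  ∀ C : Finset ℕ, C.Nonempty → (∀ c ∈ C, 1 ≤ c ∧ c ≤ l - 1) →
    ∀ v : V, (∑ᶠ u ∈ cuspUnip F l ρ C, π u v) = 0

/-- `Γ` is a (nonzero) `ψ`-Whittaker functional for `π`. -/
def IsWhittaker (l : ℕ) (ρ : F) (ψ : AddChar F ℂ) {V : Type*} [AddCommGroup V] [Module ℂ V]
    (π : Representation ℂ (SO2l F l ρ) V) (Γ : V →ₗ[ℂ] ℂ) : Prop :=
  Γ ≠ 0 ∧ ∀ u ∈ USet F l ρ, ∀ v : V, Γ (π u v) = psiU F l ψ (mat F u) * Γ v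

/-- `v₀` is a Whittaker vector with `Γ v₀ ≠ 0`. -/
def IsWhitVec (l : ℕ) (ρ : F) (ψ : AddChar F ℂ) {V : Type*} [AddCommGroup V] [Module ℂ V]
    (π : Representation ℂ (SO2l F l ρ) V) (Γ : V →ₗ[ℂ] ℂ) (v₀ : V) : Prop :=
  Γ v₀ ≠ 0 ∧ ∀ u ∈ USet F l ρ, π u v₀ = psiU F l ψ (mat F u) • v₀

/-- The normalized Bessel function attached to the Whittaker data `(Γ, v₀)`. -/
def Bessel (l : ℕ) (ρ : F) {V : Type*} [AddCommGroup V] [Module ℂ V]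
    (π : Representation ℂ (SO2l F l ρ) V) (Γ : V →ₗ[ℂ] ℂ) (v₀ : V) :
    SO2l F l ρ → ℂ :=
  fun g => Γ (π g v₀) / Γ v₀

/-- Equality of central characters. -/
def SameCentralChar (l : ℕ) (ρ : F) {V V' : Type*} [AddCommGroup V] [Module ℂ V]
    [AddCommGroup V'] [Module ℂ V'] (π : Representation ℂ (SO2l F l ρ) V)
    (π' : Representation ℂ (SO2l F l ρ) V') : Prop :=
  ∃ ω : ℂ, (∀ g : SO2l F l ρ, mat F g = -1 → ∀ v : V, π g v = ω • v) ∧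
    (∀ g : SO2l F l ρ, mat F g = -1 → ∀ v' : V', π' g v' = ω • v')
/-- `a^* = J_n · (a⁻¹)ᵀ · J_n`. -/
def aStar (n : ℕ) (a : Matrix (Fin n) (Fin n) F) : Matrix (Fin n) (Fin n) F :=
  Jmat F n * (a⁻¹)ᵀ * Jmat F n

/-- The permutation matrix of `σ`. -/
def permMat (n : ℕ) (σ : Equiv.Perm (Fin n)) : Matrix (Fin n) (Fin n) F :=
  Matrix.of fun i j => if σ j = i then 1 else 0

/-- `t_n(a) = diag(a, I_{2l-2n}, a^*)` inside `2l × 2l` matrices. -/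
def tnMat (l n : ℕ) (a : Matrix (Fin n) (Fin n) F) : Matrix (Fin (2*l)) (Fin (2*l)) F :=
  Matrix.of fun i j =>
    if hi : (i : ℕ) < n then (if hj : (j : ℕ) < n then a ⟨i, hi⟩ ⟨j, hj⟩ else 0)
    else if hi2 : (i : ℕ) < 2*l - n then (if i = j then 1 else 0)
    else if hj2 : 2*l - n ≤ (j : ℕ) then
      aStar F n a ⟨(i : ℕ) - (2*l - n), by have := i.isLt; omega⟩
        ⟨(j : ℕ) - (2*l - n), by have := j.isLt; omega⟩
    else 0

/-- The Weyl representative `w̃_n` of `SO_{2l}` as a block matrix. -/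
def wTildeMat (l n : ℕ) : Matrix (Fin (2*l)) (Fin (2*l)) F :=
  Matrix.of fun i j =>
    if (i : ℕ) < n then (if (j : ℕ) = (i : ℕ) + (2*l - n) then 1 else 0)
    else if (i : ℕ) < l - 1 then (if i = j then 1 else 0)
    else if (i : ℕ) = l - 1 then (if i = j then (-1)^n else 0)
    else if (i : ℕ) < 2*l - n then (if i = j then 1 else 0)
    else (if (j : ℕ) + (2*l - n) = (i : ℕ) then 1 else 0)

/-- The torus matrix `diag(t_1,…,t_{l-1}, [[a,bρ],[b,a]], t_{l-1}⁻¹,…,t_1⁻¹)`. -/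
def torusMat (l : ℕ) (ρ : F) (tv : ℕ → Fˣ) (a b : F) :
    Matrix (Fin (2*l)) (Fin (2*l)) F :=
  Matrix.of fun i j =>
    if (i : ℕ) < l - 1 then (if i = j then (tv (i : ℕ) : F) else 0)
    else if (i : ℕ) = l - 1 then
      (if (j : ℕ) = l - 1 then a else if (j : ℕ) = l then b * ρ else 0)
    else if (i : ℕ) = l then
      (if (j : ℕ) = l - 1 then b else if (j : ℕ) = l then a else 0)
    else (if i = j then ((tv (2*l - 1 - (i : ℕ)))⁻¹ : F) else 0)

/-- The outer element `c = diag(I_{l-1}, 1, -1, I_{l-1})`. -/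
def cMat (l : ℕ) : Matrix (Fin (2*l)) (Fin (2*l)) F :=
  Matrix.of fun i j => if i = j then (if (i : ℕ) = l then -1 else 1) else 0

/-- The torus element `t̃ = diag(I_{l-1}, -1, -1, I_{l-1})`. -/
def tTildeMat (l : ℕ) : Matrix (Fin (2*l)) (Fin (2*l)) F :=
  Matrix.of fun i j =>
    if i = j then (if (i : ℕ) = l - 1 ∨ (i : ℕ) = l then -1 else 1) else 0

/-- `l_n(a) = diag(a, 1, a^*)` inside `(2n+1) × (2n+1)` matrices. -/
def lnMat (n : ℕ) (a : Matrix (Fin n) (Fin n) F) :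
    Matrix (Fin (2*n+1)) (Fin (2*n+1)) F :=
  Matrix.of fun i j =>
    if hi : (i : ℕ) < n then (if hj : (j : ℕ) < n then a ⟨i, hi⟩ ⟨j, hj⟩ else 0)
    else if hi2 : (i : ℕ) = n then (if i = j then 1 else 0)
    else if hj2 : n + 1 ≤ (j : ℕ) then
      aStar F n a ⟨(i : ℕ) - (n+1), by have := i.isLt; omega⟩
        ⟨(j : ℕ) - (n+1), by have := j.isLt; omega⟩
    else 0

/-- The Weyl element `w_n` of `SO_{2n+1}` with block rows `(0,0,I_n)`, `(0,(-1)^n,0)`, `(I_n,0,0)`. -/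
def wnOddMat (n : ℕ) : Matrix (Fin (2*n+1)) (Fin (2*n+1)) F :=
  Matrix.of fun i j =>
    if (i : ℕ) < n then (if (j : ℕ) = (i : ℕ) + n + 1 then 1 else 0)
    else if (i : ℕ) = n then (if i = j then (-1)^n else 0)
    else (if (j : ℕ) + n + 1 = (i : ℕ) then 1 else 0)

/-- `d_n = diag(-1, 1, …, (-1)^n)`. -/
def dnMat (n : ℕ) : Matrix (Fin n) (Fin n) F :=
  Matrix.of fun i j => if i = j then (-1)^((i : ℕ) + 1) else 0

/-- The block permutation matrix `w^{l,n}` of `SO_{2l}`. -/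
def wlnMat (l n : ℕ) : Matrix (Fin (2*l)) (Fin (2*l)) F :=
  Matrix.of fun i j =>
    if (i : ℕ) < n then (if (j : ℕ) = (i : ℕ) + (l - n - 1) then 1 else 0)
    else if (i : ℕ) < l - 1 then (if (j : ℕ) + n = (i : ℕ) then 1 else 0)
    else if (i : ℕ) < l + 1 then (if i = j then 1 else 0)
    else if (i : ℕ) < 2*l - n then (if (j : ℕ) = (i : ℕ) + n then 1 else 0)
    else (if (j : ℕ) + (l - n - 1) = (i : ℕ) then 1 else 0)

/-- `w_{l,l} = diag(γ·I_l, 1, γ⁻¹·I_l)` with `γ = ρ/2`. -/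
def wllMat (l : ℕ) (ρ : F) : Matrix (Fin (2*l+1)) (Fin (2*l+1)) F :=
  Matrix.of fun i j =>
    if i = j then
      (if (i : ℕ) < l then ρ/2 else if (i : ℕ) = l then 1 else (ρ/2)⁻¹)
    else 0

/-- The conjugating matrix `M` for the embedding of `SO_{2l}` into `SO_{2l+1}`. -/
def Mtop (l : ℕ) (ρ : F) : Matrix (Fin (2*l+1)) (Fin (2*l+1)) F :=
  Matrix.of fun i j =>
    if (i : ℕ) + 2 = l + 1 then (if (j : ℕ) = l then 1 else 0)
    else if (i : ℕ) = l then
      (if (j : ℕ) + 2 = l + 1 then (2 : F)⁻¹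
       else if (j : ℕ) = l + 1 then (2 * (ρ/2))⁻¹ else 0)
    else if (i : ℕ) = l + 1 then
      (if (j : ℕ) + 2 = l + 1 then (2 : F)⁻¹
       else if (j : ℕ) = l + 1 then -(2 * (ρ/2))⁻¹ else 0)
    else if i = j then 1 else 0

/-- Insert a trivial `(l+1)`-st row and column (1-indexed) into a `2l × 2l` matrix. -/
def insTop (l : ℕ) (g : Matrix (Fin (2*l)) (Fin (2*l)) F) :
    Matrix (Fin (2*l+1)) (Fin (2*l+1)) F :=
  Matrix.of fun i j =>
    if hi : (i : ℕ) = l then (if (j : ℕ) = l then 1 else 0)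
    else if hj : (j : ℕ) = l then 0
    else
      g ⟨if (i : ℕ) < l then (i : ℕ) else (i : ℕ) - 1, by have := i.isLt; split <;> omega⟩
        ⟨if (j : ℕ) < l then (j : ℕ) else (j : ℕ) - 1, by have := j.isLt; split <;> omega⟩

/-- The embedding of `SO_{2l}` into `SO_{2l+1}` at the matrix level. -/
def embTop (l : ℕ) (ρ : F) (g : Matrix (Fin (2*l)) (Fin (2*l)) F) :
    Matrix (Fin (2*l+1)) (Fin (2*l+1)) F :=
  (Mtop F l ρ)⁻¹ * insTop F l g * Mtop F l ρ

/-- The conjugating matrix `M = diag(I_n, [[0,2],[1,0]], I_n)` (size `2n+2`). -/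
def Mlow (n : ℕ) : Matrix (Fin (2*n+2)) (Fin (2*n+2)) F :=
  Matrix.of fun i j =>
    if (i : ℕ) = n then (if (j : ℕ) = n + 1 then 2 else 0)
    else if (i : ℕ) = n + 1 then (if (j : ℕ) = n then 1 else 0)
    else if i = j then 1 else 0

/-- Insert a trivial `(n+2)`-nd row and column (1-indexed) into a `(2n+1) × (2n+1)` matrix. -/
def insLow (n : ℕ) (g : Matrix (Fin (2*n+1)) (Fin (2*n+1)) F) :
    Matrix (Fin (2*n+2)) (Fin (2*n+2)) F :=
  Matrix.of fun i j =>
    if hi : (i : ℕ) = n + 1 then (if (j : ℕ) = n + 1 then 1 else 0)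
    else if hj : (j : ℕ) = n + 1 then 0
    else
      g ⟨if (i : ℕ) < n + 1 then (i : ℕ) else (i : ℕ) - 1, by have := i.isLt; split <;> omega⟩
        ⟨if (j : ℕ) < n + 1 then (j : ℕ) else (j : ℕ) - 1, by have := j.isLt; split <;> omega⟩

/-- The middle `2n+2` block of the embedding of `SO_{2n+1}` into `SO_{2l}`. -/
def embLowMid (n : ℕ) (g : Matrix (Fin (2*n+1)) (Fin (2*n+1)) F) :
    Matrix (Fin (2*n+2)) (Fin (2*n+2)) F :=
  (Mlow F n)⁻¹ * insLow F n g * Mlow F n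

/-- The embedding of `SO_{2n+1}` into `SO_{2l}` (for `n < l`) at the matrix level. -/
def embLow (l n : ℕ) (g : Matrix (Fin (2*n+1)) (Fin (2*n+1)) F) :
    Matrix (Fin (2*l)) (Fin (2*l)) F :=
  Matrix.of fun i j =>
    if h : l - n - 1 ≤ (i : ℕ) ∧ (i : ℕ) < l + n + 1 ∧ l - n - 1 ≤ (j : ℕ) ∧ (j : ℕ) < l + n + 1
    then embLowMid F n g ⟨(i : ℕ) - (l - n - 1), by omega⟩ ⟨(j : ℕ) - (l - n - 1), by omega⟩
    else if i = j then 1 else 0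
/-- The maximal torus `T` of `SO_{2l}`. -/
def TSet (l : ℕ) (ρ : F) : Set (SO2l F l ρ) :=
  {g | ∃ (tv : ℕ → Fˣ) (a b : F), a^2 - b^2 * ρ = 1 ∧ mat F g = torusMat F l ρ tv a b}

/-- The split subtorus `S` of `T`. -/
def SSet (l : ℕ) (ρ : F) : Set (SO2l F l ρ) :=
  {g | ∃ tv : ℕ → Fˣ, mat F g = torusMat F l ρ tv 1 0}

/-- The standard Borel subgroup `B = T·U` of `SO_{2l}` (as a set). -/
def BorelSet (l : ℕ) (ρ : F) : Set (SO2l F l ρ) :=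
  {b | ∃ t ∈ TSet F l ρ, ∃ u ∈ USet F l ρ, b = t * u}

/-- `w` normalizes the torus `T`. -/
def NormalizesT (l : ℕ) (ρ : F) (w : SO2l F l ρ) : Prop :=
  ∀ t ∈ TSet F l ρ, w * t * w⁻¹ ∈ TSet F l ρ ∧ w⁻¹ * t * w ∈ TSet F l ρ

/-- Standard basis weight `e_k` (as an integral character vector). -/
def eVec (k : ℕ) : ℕ → ℤ := fun i => if i = k then 1 else 0

/-- The simple (restricted) roots of `SO_{2l}`: `α_k = e_k - e_{k+1}` for `k < l-2`
(0-indexed) and `α_{l-2} = e_{l-2}`. -/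
def simpleRoot (l k : ℕ) : ℕ → ℤ :=
  fun i => (if i = k then 1 else 0) - (if i = k + 1 ∧ k + 3 ≤ l then 1 else 0)

/-- The positive (restricted) roots of `SO_{2l}` (type `B_{l-1}`). -/
def posRoot (l : ℕ) : Set (ℕ → ℤ) :=
  {α | (∃ i j, i < j ∧ j < l - 1 ∧ α = fun k => eVec i k - eVec j k) ∨
       (∃ i j, i < j ∧ j < l - 1 ∧ α = fun k => eVec i k + eVec j k) ∨
       (∃ i, i < l - 1 ∧ α = eVec i)}

/-- Negative roots. -/
def negRoot (l : ℕ) : Set (ℕ → ℤ) := {α | (fun k => -(α k)) ∈ posRoot l}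

/-- Simple roots (as a set). -/
def isSimpleRoot (l : ℕ) (α : ℕ → ℤ) : Prop := ∃ k, k < l - 1 ∧ α = simpleRoot l k

/-- Evaluation of an integral character vector on an element of the split torus. -/
def rootEval (l : ℕ) (ρ : F) (α : ℕ → ℤ) (g : SO2l F l ρ) : F :=
  ∏ i : Fin (2*l), (if (i : ℕ) < l - 1 then (mat F g i i) ^ (α (i : ℕ)) else 1)

/-- The Weyl representative `w` maps the character `α` of `S` to the character `β`. -/
def mapsRoot (l : ℕ) (ρ : F) (w : SO2l F l ρ) (α β : ℕ → ℤ) : Prop :=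
  ∀ s ∈ SSet F l ρ, w⁻¹ * s * w ∈ SSet F l ρ ∧
    rootEval F l ρ β s = rootEval F l ρ α (w⁻¹ * s * w)

/-- The Weyl representative `w` supports Bessel functions: every simple root is mapped
to a negative or simple root. -/
def SupportsBessel (l : ℕ) (ρ : F) (w : SO2l F l ρ) : Prop :=
  ∀ k, k < l - 1 → ∃ β : ℕ → ℤ, mapsRoot F l ρ w (simpleRoot l k) β ∧
    (β ∈ negRoot l ∨ isSimpleRoot l β)

/-- `θ_w = {k : wα_k is positive}`. -/
def besselTheta (l : ℕ) (ρ : F) (w : SO2l F l ρ) : Set ℕ :=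
  {k | k < l - 1 ∧ ∃ β : ℕ → ℤ, mapsRoot F l ρ w (simpleRoot l k) β ∧ β ∈ posRoot l}

/-- The cell `B_n(SO_{2l}) = {t_n(w')·w̃_n : w' ∈ W(GL_n)}`. -/
def BnSet (l : ℕ) (ρ : F) (n : ℕ) : Set (SO2l F l ρ) :=
  {g | ∃ σ : Equiv.Perm (Fin n), mat F g = tnMat F l n (permMat F n σ) * wTildeMat F l n}

/-- Block index for the Siegel parabolic of `SO_{2n+1}`. -/
def blkSiegel (n i : ℕ) : ℕ := if i < n then 0 else if i = n then 1 else 2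

/-- The unipotent radical `V_n` of the Siegel parabolic of `SO_{2n+1}` (matrix level). -/
def VnSet (n : ℕ) : Set (Matrix (Fin (2*n+1)) (Fin (2*n+1)) F) :=
  {m | m ∈ SOset F (2*n+1) (Jmat F (2*n+1)) ∧
    ∀ i j : Fin (2*n+1), blkSiegel n (j : ℕ) ≤ blkSiegel n (i : ℕ) →
      m i j = if i = j then 1 else 0}

/-- The group `R^{l,n}` (matrix level). -/
def RlnSet (l : ℕ) (ρ : F) (n : ℕ) : Set (Matrix (Fin (2*l)) (Fin (2*l)) F) :=
  {m | m ∈ SOset F (2*l) (Jrho F l ρ) ∧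
    ∀ i j : Fin (2*l),
      ¬((n ≤ (i : ℕ) ∧ (i : ℕ) < l - 1 ∧ (j : ℕ) < n) ∨
        (2*l - n ≤ (i : ℕ) ∧ l + 1 ≤ (j : ℕ) ∧ (j : ℕ) < 2*l - n)) →
      m i j = if i = j then 1 else 0}

/-- The subgroup `N^{l-n} = U_{GL_{l-n-1}}·N_{l-n-1}` of `SO_{2l}`. -/
def NlnSet (l : ℕ) (ρ : F) (n : ℕ) : Set (SO2l F l ρ) :=
  {g | upUnip F (mat F g) ∧
    ∀ i j : Fin (2*l), l - n - 1 ≤ (i : ℕ) → (i : ℕ) < l + n + 1 →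
      l - n - 1 ≤ (j : ℕ) → (j : ℕ) < l + n + 1 →
      mat F g i j = if i = j then 1 else 0}

/-- Block index for standard parabolic subgroups of `SO_{2m+1}`, given cuts `C`. -/
def blkB (m : ℕ) (C : Finset ℕ) (i : ℕ) : ℕ :=
  (C.filter (fun c => c ≤ i)).card + (C.filter (fun c => 2*m + 1 - c ≤ i)).card

/-- The standard parabolic subgroup of `SO_{2m+1}` given by cuts `C` (as a set). -/
def pbP (m : ℕ) (C : Finset ℕ) : Set (SOodd F m) :=
  {g | ∀ i j : Fin (2*m+1), blkB m C (j : ℕ) < blkB m C (i : ℕ) → mat F g i j = 0}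

/-- The unipotent radical of the standard parabolic subgroup of `SO_{2m+1}` given by cuts `C`. -/
def pbV (m : ℕ) (C : Finset ℕ) : Set (SOodd F m) :=
  {g | ∀ i j : Fin (2*m+1), blkB m C (j : ℕ) ≤ blkB m C (i : ℕ) →
    mat F g i j = if i = j then 1 else 0}
/-- Apply a representation of `GL_n(F)` at a plain matrix (zero if not invertible). -/
def tauApp (n : ℕ) {Wτ : Type*} [AddCommGroup Wτ] [Module ℂ Wτ]
    (τ : Representation ℂ (GL (Fin n) F) Wτ) (m : Matrix (Fin n) (Fin n) F) :
    Wτ →ₗ[ℂ] Wτ :=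
  matFun (fun g : GL (Fin n) F => (g : Matrix (Fin n) (Fin n) F)) (fun g => τ g) m

/-- `Λ` is a nonzero `ψ⁻¹`-Whittaker functional for the representation `τ` of `GL_n(F)`. -/
def IsGenericGLinv (n : ℕ) (ψ : AddChar F ℂ) {Wτ : Type*} [AddCommGroup Wτ] [Module ℂ Wτ]
    (τ : Representation ℂ (GL (Fin n) F) Wτ) (Λ : Wτ →ₗ[ℂ] ℂ) : Prop :=
  Λ ≠ 0 ∧ ∀ u : GL (Fin n) F, upUnip F ((u : Matrix (Fin n) (Fin n) F)) →
    ∀ x : Wτ, Λ (τ u x) = ψ (-(glUSum F n (u : Matrix (Fin n) (Fin n) F))) * Λ x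

/-- The induced space `I(τ) = Ind_{Q_n}^{SO_{2n+1}} τ` (matrix level). -/
def IndTau (n : ℕ) {Wτ : Type*} [AddCommGroup Wτ] [Module ℂ Wτ]
    (τ : Representation ℂ (GL (Fin n) F) Wτ) :
    Set (Matrix (Fin (2*n+1)) (Fin (2*n+1)) F → Wτ) :=
  {ξ | (∀ g, g ∉ SOset F (2*n+1) (Jmat F (2*n+1)) → ξ g = 0) ∧
    ∀ a : GL (Fin n) F, ∀ u ∈ VnSet F n, ∀ g,
      ξ (lnMat F n (a : Matrix (Fin n) (Fin n) F) * u * g) = τ a (ξ g)}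

/-- The space `I(τ, ψ⁻¹)` spanned by the functions `f_ξ(g,a) = Λ(τ(a)ξ(g))`. -/
def Imodel (n : ℕ) {Wτ : Type*} [AddCommGroup Wτ] [Module ℂ Wτ]
    (τ : Representation ℂ (GL (Fin n) F) Wτ) (Λ : Wτ →ₗ[ℂ] ℂ) :
    Set (Matrix (Fin (2*n+1)) (Fin (2*n+1)) F → Matrix (Fin n) (Fin n) F → ℂ) :=
  {f | ∃ ξ ∈ IndTau F n τ, f = fun g a => Λ (tauApp F n τ a (ξ g))}

open Classical in
/-- The section `ξ_v ∈ I(τ)` supported on the Siegel parabolic with `ξ_v(l_n(a)u) = τ(a)v`. -/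
def xiv (n : ℕ) {Wτ : Type*} [AddCommGroup Wτ] [Module ℂ Wτ]
    (τ : Representation ℂ (GL (Fin n) F) Wτ) (v : Wτ) :
    Matrix (Fin (2*n+1)) (Fin (2*n+1)) F → Wτ :=
  fun m =>
    if h : ∃ p : (GL (Fin n) F) × Matrix (Fin (2*n+1)) (Fin (2*n+1)) F,
        p.2 ∈ VnSet F n ∧ m = lnMat F n ((p.1 : Matrix (Fin n) (Fin n) F)) * p.2
    then τ h.choose.1 v else 0

/-- The function `f_v = f_{ξ_v} ∈ I(τ, ψ⁻¹)`. -/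
def fvFun (n : ℕ) {Wτ : Type*} [AddCommGroup Wτ] [Module ℂ Wτ]
    (τ : Representation ℂ (GL (Fin n) F) Wτ) (Λ : Wτ →ₗ[ℂ] ℂ) (v : Wτ) :
    Matrix (Fin (2*n+1)) (Fin (2*n+1)) F → Matrix (Fin n) (Fin n) F → ℂ :=
  fun g a => Λ (tauApp F n τ a (xiv F n τ v g))

/-- The intertwining operator `M(τ, ψ⁻¹)` at the level of functions. -/
def MOp (n : ℕ)
    (f : Matrix (Fin (2*n+1)) (Fin (2*n+1)) F → Matrix (Fin n) (Fin n) F → ℂ) :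
    Matrix (Fin (2*n+1)) (Fin (2*n+1)) F → Matrix (Fin n) (Fin n) F → ℂ :=
  fun h a => ∑ᶠ u ∈ VnSet F n, f (wnOddMat F n * u * h) (dnMat F n * aStar F n a)

/-- The zeta integral for `n < l`, via the embedding `SO_{2n+1} → SO_{2l}`
(the sum over coset representatives is realized as `|U|⁻¹` times the full sum). -/
def ZetaLow (l : ℕ) (ρ : F) (n : ℕ) (φ : SO2l F l ρ → ℂ)
    (f : Matrix (Fin (2*n+1)) (Fin (2*n+1)) F → Matrix (Fin n) (Fin n) F → ℂ) : ℂ :=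
  (Nat.card (UoddMatSet F n) : ℂ)⁻¹ *
    ∑ᶠ g ∈ SOset F (2*n+1) (Jmat F (2*n+1)),
      (∑ᶠ r ∈ RlnSet F l ρ n,
        matFun (fun x : SO2l F l ρ => mat F x) φ
          (r * wlnMat F l n * embLow F l n g * (wlnMat F l n)⁻¹)) * f g 1

/-- The zeta integral for `n = l`, via the embedding `SO_{2l} → SO_{2l+1}`. -/
def ZetaTop (l : ℕ) (ρ : F) (φ : SO2l F l ρ → ℂ)
    (f : Matrix (Fin (2*l+1)) (Fin (2*l+1)) F → Matrix (Fin l) (Fin l) F → ℂ) : ℂ :=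
  (Nat.card (USet F l ρ) : ℂ)⁻¹ *
    ∑ᶠ g : SO2l F l ρ, φ g * f (wllMat F l ρ * embTop F l ρ (mat F g)) 1

/-- The combined zeta integral `Ψ` for `1 ≤ n ≤ l`. -/
def Zeta (l : ℕ) (ρ : F) (n : ℕ) (φ : SO2l F l ρ → ℂ)
    (f : Matrix (Fin (2*n+1)) (Fin (2*n+1)) F → Matrix (Fin n) (Fin n) F → ℂ) : ℂ :=
  if n < l then ZetaLow F l ρ n φ f
  else if h : n = l then ZetaTop F l ρ φ (cast (by rw [h]) f)
  else 0

/-- `c` is the gamma factor `γ(π × τ, ψ)`: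
`c · Ψ(W_v, f) = Ψ(W_v, M(τ,ψ⁻¹) f)` for all Whittaker functions `W_v` of `π`
and all `f ∈ I(τ, ψ⁻¹)`. -/
def IsGamma (l : ℕ) (ρ : F) (n : ℕ) {V : Type*} [AddCommGroup V] [Module ℂ V]
    (π : Representation ℂ (SO2l F l ρ) V) (Γ : V →ₗ[ℂ] ℂ)
    {Wτ : Type*} [AddCommGroup Wτ] [Module ℂ Wτ]
    (τ : Representation ℂ (GL (Fin n) F) Wτ) (Λ : Wτ →ₗ[ℂ] ℂ) (c : ℂ) : Prop :=
  ∀ v : V, ∀ f ∈ Imodel F n τ Λ,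
    c * Zeta F l ρ n (fun g => Γ (π g v)) f =
      Zeta F l ρ n (fun g => Γ (π g v)) (MOp F n f)

/-- The Bessel function of the conjugate representation `π^c`:
`B_{π^c,ψ}(g) = B_{π,ψ}(c·t̃⁻¹·g·t̃·c)`. -/
def BesselConj (l : ℕ) (ρ : F) (B : SO2l F l ρ → ℂ) : SO2l F l ρ → ℂ :=
  fun g => matFun (fun x : SO2l F l ρ => mat F x) B
    (cMat F l * (tTildeMat F l)⁻¹ * mat F g * tTildeMat F l * cMat F l)

section AuxBasic

variable {F : Type} [Field F]

lemma psi_kill (ψ : AddChar F ℂ) (hψ : ψ ≠ 1) (d : F) (h : ∀ x : F, ψ (d * x) = 1) :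
    d = 0 := by
  by_contra hd
  apply hψ
  ext y
  have := h (d⁻¹ * y)
  rwa [← mul_assoc, mul_inv_cancel₀ hd, one_mul] at this

lemma psi_scale (ψ : AddChar F ℂ) (hψ : ψ ≠ 1) (c : F) (h : ∀ x : F, ψ (c * x) = ψ x) :
    c = 1 := by
  have key : ∀ x : F, ψ ((c - 1) * x) = 1 := by
    intro x
    have h2 : ψ (c * x) * ψ (-x) = ψ x * ψ (-x) := by rw [h x]
    rw [← AddChar.map_add_eq_mul, ← AddChar.map_add_eq_mul, add_neg_cancel,
      AddChar.map_zero_eq_one] at h2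
    rw [show (c - 1) * x = c * x + -x by ring]
    exact h2
  exact sub_eq_zero.mp (psi_kill ψ hψ (c - 1) key)

lemma two_ne_zero_of_card (p r : ℕ) (hp : p.Prime) (hp2 : p ≠ 2) (hr : 0 < r)
    [Fintype F] (hcard : Fintype.card F = p ^ r) : (2 : F) ≠ 0 := by
  obtain ⟨n, hchar, hc⟩ := FiniteField.card F (ringChar F)
  intro h2
  have hdvd : (ringChar F : ℕ) ∣ 2 :=
    (CharP.cast_eq_zero_iff F (ringChar F) 2).mp (by exact_mod_cast h2)
  have hq : ringChar F = p := by
    have hd : ringChar F ∣ p ^ r := by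
      rw [← hcard, hc]
      exact dvd_pow_self _ (by positivity)
    exact (Nat.prime_dvd_prime_iff_eq hchar hp).mp (Nat.Prime.dvd_of_dvd_pow hchar hd)
  rw [hq] at hdvd
  exact hp2 ((Nat.prime_dvd_prime_iff_eq hp Nat.prime_two).mp hdvd)

/-- Multiplying a matrix on the right by a standard basis matrix. -/
lemma mulE {m : ℕ} (A : Matrix (Fin m) (Fin m) F) (i j : Fin m) (c : F) :
    A * Matrix.single i j c = Matrix.of fun p q => if q = j then A p i * c else 0 := by
  ext p q
  by_cases hq : q = j
  · subst hq
    simp [Matrix.mul_single_apply_same]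
  · simp [Matrix.mul_single_apply_of_ne _ _ _ _ _ hq, hq]

/-- Multiplying a matrix on the left by a standard basis matrix. -/
lemma Emul {m : ℕ} (i j : Fin m) (c : F) (A : Matrix (Fin m) (Fin m) F) :
    Matrix.single i j c * A = Matrix.of fun p q => if p = i then c * A j q else 0 := by
  ext p q
  by_cases hp : p = i
  · subst hp
    simp [Matrix.single_mul_apply_same]
  · simp [Matrix.single_mul_apply_of_ne _ _ _ _ _ hp, hp]

lemma Et {m : ℕ} (i j : Fin m) (c : F) :
    (Matrix.single i j c)ᵀ = Matrix.single j i c := by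
  ext p q
  simp [Matrix.single, Matrix.transpose_apply, and_comm]

end AuxBasic

section AuxJ

variable {F : Type} [Field F]

lemma Jrho_apply {l : ℕ} (hl : 2 ≤ l) (ρ : F) (i j : Fin (2*l)) :
    Jrho F l ρ i j =
      if (i:ℕ) = l - 1 then (if (j:ℕ) = l - 1 then 1 else 0)
      else if (i:ℕ) = l then (if (j:ℕ) = l then -ρ else 0)
      else if (i:ℕ) + (j:ℕ) + 1 = 2*l then 1 else 0 := by
  have hi := i.isLt
  have hj := j.isLt
  rw [Jrho, Matrix.mul_apply]
  rw [Finset.sum_eq_single (⟨2*l-1-(j:ℕ), by omega⟩ : Fin (2*l))]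
  · have h1 : Jmat F (2*l) (⟨2*l-1-(j:ℕ), by omega⟩ : Fin (2*l)) j = 1 := by
      simp only [Jmat, Matrix.of_apply]
      rw [if_pos]
      omega
    rw [h1, mul_one]
    simp only [Dmat, Matrix.of_apply, Fin.ext_iff]
    split_ifs <;> first | rfl | (exfalso; omega)
  · intro k _ hk
    have hne : ¬((k:ℕ) + (j:ℕ) + 1 = 2*l) := by
      intro hcon
      exact hk (Fin.ext (show (k:ℕ) = 2*l-1-(j:ℕ) by omega))
    simp [Jmat, hne]
  · simp

lemma Jrho_symm {l : ℕ} (hl : 2 ≤ l) (ρ : F) : (Jrho F l ρ)ᵀ = Jrho F l ρ := by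
  ext p q
  rw [Matrix.transpose_apply, Jrho_apply hl, Jrho_apply hl]
  have := p.isLt
  have := q.isLt
  split_ifs <;> first | rfl | omega | (exfalso; omega)

lemma Jrho_mul_E {l : ℕ} (hl : 2 ≤ l) (ρ : F) (a b : ℕ) (ha : a < 2*l) (hb : b < 2*l)
    (hmir : a + b + 1 = 2*l) (ha1 : a ≠ l - 1) (ha2 : a ≠ l) (j : Fin (2*l)) (c : F) :
    Jrho F l ρ * Matrix.single (⟨a, ha⟩ : Fin (2*l)) j c =
      Matrix.single (⟨b, hb⟩ : Fin (2*l)) j c := by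
  rw [mulE]
  ext p q
  have := p.isLt
  simp only [Matrix.of_apply, Matrix.single, Jrho_apply hl, Fin.ext_iff]
  split_ifs <;> first | ring1 | (exfalso; omega)

lemma Jrho_mul_E_mid1 {l : ℕ} (hl : 2 ≤ l) (ρ : F) (ha : l - 1 < 2*l)
    (j : Fin (2*l)) (c : F) :
    Jrho F l ρ * Matrix.single (⟨l-1, ha⟩ : Fin (2*l)) j c =
      Matrix.single (⟨l-1, ha⟩ : Fin (2*l)) j c := by
  rw [mulE]
  ext p q
  have := p.isLt
  simp only [Matrix.of_apply, Matrix.single, Jrho_apply hl, Fin.ext_iff]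
  split_ifs <;> first | ring1 | (exfalso; omega)

lemma Jrho_mul_E_mid2 {l : ℕ} (hl : 2 ≤ l) (ρ : F) (ha : l < 2*l)
    (j : Fin (2*l)) (c : F) :
    Jrho F l ρ * Matrix.single (⟨l, ha⟩ : Fin (2*l)) j c =
      Matrix.single (⟨l, ha⟩ : Fin (2*l)) j (-(ρ*c)) := by
  rw [mulE]
  ext p q
  have := p.isLt
  simp only [Matrix.of_apply, Matrix.single, Jrho_apply hl, Fin.ext_iff]
  split_ifs <;> first | ring1 | (exfalso; omega)

lemma E_mul_Jrho {l : ℕ} (hl : 2 ≤ l) (ρ : F) (a b : ℕ) (ha : a < 2*l) (hb : b < 2*l)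
    (hmir : a + b + 1 = 2*l) (ha1 : a ≠ l - 1) (ha2 : a ≠ l) (i : Fin (2*l)) (c : F) :
    Matrix.single i (⟨a, ha⟩ : Fin (2*l)) c * Jrho F l ρ =
      Matrix.single i (⟨b, hb⟩ : Fin (2*l)) c := by
  rw [Emul]
  ext p q
  have := q.isLt
  simp only [Matrix.of_apply, Matrix.single, Jrho_apply hl, Fin.ext_iff]
  split_ifs <;> first | ring1 | (exfalso; omega)

lemma E_mul_Jrho_mid1 {l : ℕ} (hl : 2 ≤ l) (ρ : F) (ha : l - 1 < 2*l)
    (i : Fin (2*l)) (c : F) :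
    Matrix.single i (⟨l-1, ha⟩ : Fin (2*l)) c * Jrho F l ρ =
      Matrix.single i (⟨l-1, ha⟩ : Fin (2*l)) c := by
  rw [Emul]
  ext p q
  have := q.isLt
  simp only [Matrix.of_apply, Matrix.single, Jrho_apply hl, Fin.ext_iff]
  split_ifs <;> first | ring1 | (exfalso; omega)

lemma E_mul_Jrho_mid2 {l : ℕ} (hl : 2 ≤ l) (ρ : F) (ha : l < 2*l)
    (i : Fin (2*l)) (c : F) :
    Matrix.single i (⟨l, ha⟩ : Fin (2*l)) c * Jrho F l ρ =
      Matrix.single i (⟨l, ha⟩ : Fin (2*l)) (c * (-ρ)) := by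
  rw [Emul]
  ext p q
  have := q.isLt
  simp only [Matrix.of_apply, Matrix.single, Jrho_apply hl, Fin.ext_iff]
  split_ifs <;> first | ring1 | (exfalso; omega)

end AuxJ

section AuxUL

variable {F : Type} [Field F]

/-- Long-root unipotent element. -/
def uLMat (l i₀ : ℕ) (h3 : i₀ + 3 ≤ l) (x : F) : Matrix (Fin (2*l)) (Fin (2*l)) F :=
  1 + Matrix.single (⟨i₀, by omega⟩ : Fin (2*l)) (⟨i₀+1, by omega⟩ : Fin (2*l)) x
    - Matrix.single (⟨2*l-2-i₀, by omega⟩ : Fin (2*l)) (⟨2*l-1-i₀, by omega⟩ : Fin (2*l)) x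

lemma uLMat_apply (l i₀ : ℕ) (h3 : i₀ + 3 ≤ l) (x : F) (p q : Fin (2*l)) :
    uLMat l i₀ h3 x p q =
      if (p:ℕ) = (q:ℕ) then 1
      else if (p:ℕ) = i₀ ∧ (q:ℕ) = i₀+1 then x
      else if (p:ℕ) = 2*l-2-i₀ ∧ (q:ℕ) = 2*l-1-i₀ then -x
      else 0 := by
  simp only [uLMat, Matrix.add_apply, Matrix.sub_apply, Matrix.one_apply,
    Matrix.single, Matrix.of_apply, Fin.ext_iff]
  split_ifs <;> first | ring1 | (exfalso; omega)

lemma uL_upUnip (l i₀ : ℕ) (h3 : i₀ + 3 ≤ l) (x : F) : upUnip F (uLMat l i₀ h3 x) := by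
  intro p q hle
  rw [uLMat_apply]
  simp only [Fin.ext_iff]
  split_ifs <;> first | rfl | (exfalso; omega)

lemma uL_det (l i₀ : ℕ) (h3 : i₀ + 3 ≤ l) (x : F) : (uLMat l i₀ h3 x).det = 1 := by
  have hbt : (uLMat l i₀ h3 x).BlockTriangular id := by
    intro p q hlt
    have hlt' : (q:ℕ) < (p:ℕ) := hlt
    rw [uLMat_apply]
    split_ifs <;> first | rfl | (exfalso; omega)
  rw [Matrix.det_of_upperTriangular hbt]
  apply Finset.prod_eq_one
  intro p _
  rw [uLMat_apply]
  split_ifs <;> first | rfl | (exfalso; omega)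

lemma uL_orth (l i₀ : ℕ) (hl : 2 ≤ l) (h3 : i₀ + 3 ≤ l) (ρ : F) (x : F) :
    (uLMat l i₀ h3 x)ᵀ * Jrho F l ρ * uLMat l i₀ h3 x = Jrho F l ρ := by
  have e1 : Matrix.single (⟨i₀+1, by omega⟩ : Fin (2*l)) (⟨i₀, by omega⟩ : Fin (2*l)) x
      * Jrho F l ρ =
      Matrix.single (⟨i₀+1, by omega⟩ : Fin (2*l)) (⟨2*l-1-i₀, by omega⟩ : Fin (2*l)) x :=
    E_mul_Jrho hl ρ i₀ (2*l-1-i₀) (by omega) (by omega) (by omega) (by omega) (by omega) _ x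
  have e2 : Matrix.single (⟨2*l-1-i₀, by omega⟩ : Fin (2*l))
      (⟨2*l-2-i₀, by omega⟩ : Fin (2*l)) x * Jrho F l ρ =
      Matrix.single (⟨2*l-1-i₀, by omega⟩ : Fin (2*l)) (⟨i₀+1, by omega⟩ : Fin (2*l)) x :=
    E_mul_Jrho hl ρ (2*l-2-i₀) (i₀+1) (by omega) (by omega) (by omega) (by omega) (by omega) _ x
  have e3 : Jrho F l ρ * Matrix.single (⟨i₀, by omega⟩ : Fin (2*l))
      (⟨i₀+1, by omega⟩ : Fin (2*l)) x =
      Matrix.single (⟨2*l-1-i₀, by omega⟩ : Fin (2*l)) (⟨i₀+1, by omega⟩ : Fin (2*l)) x :=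
    Jrho_mul_E hl ρ i₀ (2*l-1-i₀) (by omega) (by omega) (by omega) (by omega) (by omega) _ x
  have e4 : Jrho F l ρ * Matrix.single (⟨2*l-2-i₀, by omega⟩ : Fin (2*l))
      (⟨2*l-1-i₀, by omega⟩ : Fin (2*l)) x =
      Matrix.single (⟨i₀+1, by omega⟩ : Fin (2*l)) (⟨2*l-1-i₀, by omega⟩ : Fin (2*l)) x :=
    Jrho_mul_E hl ρ (2*l-2-i₀) (i₀+1) (by omega) (by omega) (by omega) (by omega) (by omega) _ x
  have n1 : (⟨2*l-1-i₀, by omega⟩ : Fin (2*l)) ≠ (⟨i₀, by omega⟩ : Fin (2*l)) := by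
    simp only [ne_eq, Fin.mk.injEq]; omega
  have n2 : (⟨2*l-1-i₀, by omega⟩ : Fin (2*l)) ≠ (⟨2*l-2-i₀, by omega⟩ : Fin (2*l)) := by
    simp only [ne_eq, Fin.mk.injEq]; omega
  have n3 : (⟨i₀+1, by omega⟩ : Fin (2*l)) ≠ (⟨i₀, by omega⟩ : Fin (2*l)) := by
    simp only [ne_eq, Fin.mk.injEq]; omega
  have n4 : (⟨i₀+1, by omega⟩ : Fin (2*l)) ≠ (⟨2*l-2-i₀, by omega⟩ : Fin (2*l)) := by
    simp only [ne_eq, Fin.mk.injEq]; omega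
  simp only [uLMat, Matrix.transpose_sub, Matrix.transpose_add, Matrix.transpose_one, Et,
    Matrix.sub_mul, Matrix.add_mul, Matrix.one_mul, Matrix.mul_sub, Matrix.mul_add,
    Matrix.mul_one, e1, e2, e3, e4]
  rw [Matrix.single_mul_single_of_ne (h := n1), Matrix.single_mul_single_of_ne (h := n2),
    Matrix.single_mul_single_of_ne (h := n3), Matrix.single_mul_single_of_ne (h := n4)]
  abel

lemma psiU_uL (l i₀ : ℕ) (hl : 2 ≤ l) (h3 : i₀ + 3 ≤ l) (ψ : AddChar F ℂ) (x : F) :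
    psiU F l ψ (uLMat l i₀ h3 x) = ψ x := by
  unfold psiU
  congr 1
  have hpt : ∀ p q : Fin (2*l),
      (if (q:ℕ) = (p:ℕ)+1 ∧ (p:ℕ)+3 ≤ l then uLMat l i₀ h3 x p q
       else if (p:ℕ)+2 = l ∧ (q:ℕ) = l then (2:F)⁻¹ * uLMat l i₀ h3 x p q else 0)
      = if p = (⟨i₀, by omega⟩ : Fin (2*l)) ∧ q = (⟨i₀+1, by omega⟩ : Fin (2*l)) then x
        else 0 := by
    intro p q
    rw [uLMat_apply]
    simp only [Fin.ext_iff]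
    split_ifs <;> first | ring1 | (exfalso; omega)
  calc (∑ p : Fin (2*l), ∑ q : Fin (2*l),
        if (q:ℕ) = (p:ℕ)+1 ∧ (p:ℕ)+3 ≤ l then uLMat l i₀ h3 x p q
        else if (p:ℕ)+2 = l ∧ (q:ℕ) = l then (2:F)⁻¹ * uLMat l i₀ h3 x p q else 0)
      = ∑ p : Fin (2*l), ∑ q : Fin (2*l),
        if p = (⟨i₀, by omega⟩ : Fin (2*l)) ∧ q = (⟨i₀+1, by omega⟩ : Fin (2*l)) then x
        else 0 :=
        Finset.sum_congr rfl fun p _ => Finset.sum_congr rfl fun q _ => hpt p q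
    _ = x := by simp [ite_and]

end AuxUL

section AuxTorus

variable {F : Type} [Field F]

lemma torus_col_small {l : ℕ} (hl : 2 ≤ l) (ρ : F) (tv : ℕ → Fˣ) (a b : F)
    (k : ℕ) (hk : k < l - 1) (hk2 : k < 2*l) (p : Fin (2*l)) :
    torusMat F l ρ tv a b p ⟨k, hk2⟩ = if (p:ℕ) = k then (tv k : F) else 0 := by
  simp only [torusMat, Matrix.of_apply, Fin.ext_iff]
  by_cases hp : (p:ℕ) = k
  · rw [hp]
    split_ifs <;> first | rfl | (exfalso; omega)
  · split_ifs <;> first | rfl | (exfalso; omega)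

lemma torus_col_big {l : ℕ} (hl : 2 ≤ l) (ρ : F) (tv : ℕ → Fˣ) (a b : F)
    (k : ℕ) (hk : l + 1 ≤ k) (hk2 : k < 2*l) (p : Fin (2*l)) :
    torusMat F l ρ tv a b p ⟨k, hk2⟩ = if (p:ℕ) = k then ((tv (2*l-1-k) : F))⁻¹ else 0 := by
  simp only [torusMat, Matrix.of_apply, Fin.ext_iff]
  by_cases hp : (p:ℕ) = k
  · rw [hp]
    split_ifs <;> first | rfl | (exfalso; omega)
  · split_ifs <;> first | rfl | (exfalso; omega)

lemma torus_col_m1 {l : ℕ} (hl : 2 ≤ l) (ρ : F) (tv : ℕ → Fˣ) (a b : F)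
    (hk2 : l - 1 < 2*l) (p : Fin (2*l)) :
    torusMat F l ρ tv a b p ⟨l-1, hk2⟩ =
      if (p:ℕ) = l-1 then a else if (p:ℕ) = l then b else 0 := by
  simp only [torusMat, Matrix.of_apply, Fin.ext_iff]
  split_ifs <;> first | rfl | (exfalso; omega)

lemma torus_col_m2 {l : ℕ} (hl : 2 ≤ l) (ρ : F) (tv : ℕ → Fˣ) (a b : F)
    (hk2 : l < 2*l) (p : Fin (2*l)) :
    torusMat F l ρ tv a b p ⟨l, hk2⟩ =
      if (p:ℕ) = l-1 then b * ρ else if (p:ℕ) = l then a else 0 := by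
  simp only [torusMat, Matrix.of_apply, Fin.ext_iff]
  split_ifs <;> first | rfl | (exfalso; omega)

lemma torus_row_small {l : ℕ} (hl : 2 ≤ l) (ρ : F) (tv : ℕ → Fˣ) (a b : F)
    (k : ℕ) (hk : k < l - 1) (hk2 : k < 2*l) (q : Fin (2*l)) :
    torusMat F l ρ tv a b ⟨k, hk2⟩ q = if (q:ℕ) = k then (tv k : F) else 0 := by
  simp only [torusMat, Matrix.of_apply, Fin.ext_iff]
  by_cases hq : (q:ℕ) = k
  · rw [hq]
    split_ifs <;> first | rfl | (exfalso; omega)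
  · split_ifs <;> first | rfl | (exfalso; omega)

lemma torus_row_big {l : ℕ} (hl : 2 ≤ l) (ρ : F) (tv : ℕ → Fˣ) (a b : F)
    (k : ℕ) (hk : l + 1 ≤ k) (hk2 : k < 2*l) (q : Fin (2*l)) :
    torusMat F l ρ tv a b ⟨k, hk2⟩ q = if (q:ℕ) = k then ((tv (2*l-1-k) : F))⁻¹ else 0 := by
  simp only [torusMat, Matrix.of_apply, Fin.ext_iff]
  split_ifs <;> first | rfl | (exfalso; omega)

lemma torus_row_m1 {l : ℕ} (hl : 2 ≤ l) (ρ : F) (tv : ℕ → Fˣ) (a b : F)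
    (hk2 : l - 1 < 2*l) (q : Fin (2*l)) :
    torusMat F l ρ tv a b ⟨l-1, hk2⟩ q =
      if (q:ℕ) = l-1 then a else if (q:ℕ) = l then b * ρ else 0 := by
  simp only [torusMat, Matrix.of_apply, Fin.ext_iff]
  split_ifs <;> first | rfl | (exfalso; omega)

lemma torus_row_m2 {l : ℕ} (hl : 2 ≤ l) (ρ : F) (tv : ℕ → Fˣ) (a b : F)
    (hk2 : l < 2*l) (q : Fin (2*l)) :
    torusMat F l ρ tv a b ⟨l, hk2⟩ q =
      if (q:ℕ) = l-1 then b else if (q:ℕ) = l then a else 0 := by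
  simp only [torusMat, Matrix.of_apply, Fin.ext_iff]
  split_ifs <;> first | rfl | (exfalso; omega)

lemma torus_mul_E_small {l : ℕ} (hl : 2 ≤ l) (ρ : F) (tv : ℕ → Fˣ) (a b : F)
    (k : ℕ) (hk : k < l - 1) (hk2 : k < 2*l) (j : Fin (2*l)) (c : F) :
    torusMat F l ρ tv a b * Matrix.single (⟨k, hk2⟩ : Fin (2*l)) j c =
      Matrix.single (⟨k, hk2⟩ : Fin (2*l)) j ((tv k : F) * c) := by
  rw [mulE]
  ext p q
  rw [Matrix.of_apply, torus_col_small hl ρ tv a b k hk hk2 p]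
  simp only [Matrix.single, Matrix.of_apply, Fin.ext_iff]
  split_ifs <;> first | ring1 | (exfalso; omega)

lemma torus_mul_E_big {l : ℕ} (hl : 2 ≤ l) (ρ : F) (tv : ℕ → Fˣ) (a b : F)
    (k : ℕ) (hk : l + 1 ≤ k) (hk2 : k < 2*l) (j : Fin (2*l)) (c : F) :
    torusMat F l ρ tv a b * Matrix.single (⟨k, hk2⟩ : Fin (2*l)) j c =
      Matrix.single (⟨k, hk2⟩ : Fin (2*l)) j (((tv (2*l-1-k) : F))⁻¹ * c) := by
  rw [mulE]
  ext p q
  rw [Matrix.of_apply, torus_col_big hl ρ tv a b k hk hk2 p]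
  simp only [Matrix.single, Matrix.of_apply, Fin.ext_iff]
  split_ifs <;> first | ring1 | (exfalso; omega)

lemma torus_mul_E_m1 {l : ℕ} (hl : 2 ≤ l) (ρ : F) (tv : ℕ → Fˣ) (a b : F)
    (hk2 : l - 1 < 2*l) (hk3 : l < 2*l) (j : Fin (2*l)) (c : F) :
    torusMat F l ρ tv a b * Matrix.single (⟨l-1, hk2⟩ : Fin (2*l)) j c =
      Matrix.single (⟨l-1, hk2⟩ : Fin (2*l)) j (a * c)
      + Matrix.single (⟨l, hk3⟩ : Fin (2*l)) j (b * c) := by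
  rw [mulE]
  ext p q
  rw [Matrix.add_apply, Matrix.of_apply, torus_col_m1 hl ρ tv a b hk2 p]
  simp only [Matrix.single, Matrix.of_apply, Fin.ext_iff]
  split_ifs <;> first | ring1 | (exfalso; omega)

lemma torus_mul_E_m2 {l : ℕ} (hl : 2 ≤ l) (ρ : F) (tv : ℕ → Fˣ) (a b : F)
    (hk2 : l - 1 < 2*l) (hk3 : l < 2*l) (j : Fin (2*l)) (c : F) :
    torusMat F l ρ tv a b * Matrix.single (⟨l, hk3⟩ : Fin (2*l)) j c =
      Matrix.single (⟨l-1, hk2⟩ : Fin (2*l)) j (b * ρ * c)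
      + Matrix.single (⟨l, hk3⟩ : Fin (2*l)) j (a * c) := by
  rw [mulE]
  ext p q
  rw [Matrix.add_apply, Matrix.of_apply, torus_col_m2 hl ρ tv a b hk3 p]
  simp only [Matrix.single, Matrix.of_apply, Fin.ext_iff]
  split_ifs <;> first | ring1 | (exfalso; omega)

lemma E_mul_torus_small {l : ℕ} (hl : 2 ≤ l) (ρ : F) (tv : ℕ → Fˣ) (a b : F)
    (k : ℕ) (hk : k < l - 1) (hk2 : k < 2*l) (i : Fin (2*l)) (c : F) :
    Matrix.single i (⟨k, hk2⟩ : Fin (2*l)) c * torusMat F l ρ tv a b =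
      Matrix.single i (⟨k, hk2⟩ : Fin (2*l)) (c * (tv k : F)) := by
  rw [Emul]
  ext p q
  rw [Matrix.of_apply, torus_row_small hl ρ tv a b k hk hk2 q]
  simp only [Matrix.single, Matrix.of_apply, Fin.ext_iff]
  split_ifs <;> first | ring1 | (exfalso; omega)

lemma E_mul_torus_big {l : ℕ} (hl : 2 ≤ l) (ρ : F) (tv : ℕ → Fˣ) (a b : F)
    (k : ℕ) (hk : l + 1 ≤ k) (hk2 : k < 2*l) (i : Fin (2*l)) (c : F) :
    Matrix.single i (⟨k, hk2⟩ : Fin (2*l)) c * torusMat F l ρ tv a b =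
      Matrix.single i (⟨k, hk2⟩ : Fin (2*l)) (c * ((tv (2*l-1-k) : F))⁻¹) := by
  rw [Emul]
  ext p q
  rw [Matrix.of_apply, torus_row_big hl ρ tv a b k hk hk2 q]
  simp only [Matrix.single, Matrix.of_apply, Fin.ext_iff]
  split_ifs <;> first | ring1 | (exfalso; omega)

lemma E_mul_torus_m1 {l : ℕ} (hl : 2 ≤ l) (ρ : F) (tv : ℕ → Fˣ) (a b : F)
    (hk2 : l - 1 < 2*l) (hk3 : l < 2*l) (i : Fin (2*l)) (c : F) :
    Matrix.single i (⟨l-1, hk2⟩ : Fin (2*l)) c * torusMat F l ρ tv a b =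
      Matrix.single i (⟨l-1, hk2⟩ : Fin (2*l)) (c * a)
      + Matrix.single i (⟨l, hk3⟩ : Fin (2*l)) (c * (b * ρ)) := by
  rw [Emul]
  ext p q
  rw [Matrix.add_apply, Matrix.of_apply, torus_row_m1 hl ρ tv a b hk2 q]
  simp only [Matrix.single, Matrix.of_apply, Fin.ext_iff]
  split_ifs <;> first | ring1 | (exfalso; omega)

lemma E_mul_torus_m2 {l : ℕ} (hl : 2 ≤ l) (ρ : F) (tv : ℕ → Fˣ) (a b : F)
    (hk2 : l - 1 < 2*l) (hk3 : l < 2*l) (i : Fin (2*l)) (c : F) :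
    Matrix.single i (⟨l, hk3⟩ : Fin (2*l)) c * torusMat F l ρ tv a b =
      Matrix.single i (⟨l-1, hk2⟩ : Fin (2*l)) (c * b)
      + Matrix.single i (⟨l, hk3⟩ : Fin (2*l)) (c * a) := by
  rw [Emul]
  ext p q
  rw [Matrix.add_apply, Matrix.of_apply, torus_row_m2 hl ρ tv a b hk3 q]
  simp only [Matrix.single, Matrix.of_apply, Fin.ext_iff]
  split_ifs <;> first | ring1 | (exfalso; omega)

end AuxTorus

section AuxUS

variable {F : Type} [Field F]

/-- Short-root unipotent element. -/
def uSMat (l : ℕ) (hl : 2 ≤ l) (ρ : F) (x y : F) : Matrix (Fin (2*l)) (Fin (2*l)) F :=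
  1 + Matrix.single (⟨l-2, by omega⟩ : Fin (2*l)) (⟨l-1, by omega⟩ : Fin (2*l)) x
    + Matrix.single (⟨l-2, by omega⟩ : Fin (2*l)) (⟨l, by omega⟩ : Fin (2*l)) y
    + Matrix.single (⟨l-1, by omega⟩ : Fin (2*l)) (⟨l+1, by omega⟩ : Fin (2*l)) (-x)
    + Matrix.single (⟨l, by omega⟩ : Fin (2*l)) (⟨l+1, by omega⟩ : Fin (2*l)) (ρ⁻¹ * y)
    + Matrix.single (⟨l-2, by omega⟩ : Fin (2*l)) (⟨l+1, by omega⟩ : Fin (2*l))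
        ((2:F)⁻¹ * (ρ⁻¹ * y^2 - x^2))

set_option maxHeartbeats 1600000 in
lemma uSMat_apply (l : ℕ) (hl : 2 ≤ l) (ρ : F) (x y : F) (p q : Fin (2*l)) :
    uSMat l hl ρ x y p q =
      if (p:ℕ) = (q:ℕ) then 1
      else if l-2 = (p:ℕ) ∧ l-1 = (q:ℕ) then x
      else if l-2 = (p:ℕ) ∧ l = (q:ℕ) then y
      else if l-1 = (p:ℕ) ∧ l+1 = (q:ℕ) then -x
      else if l = (p:ℕ) ∧ l+1 = (q:ℕ) then ρ⁻¹ * y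
      else if l-2 = (p:ℕ) ∧ l+1 = (q:ℕ) then (2:F)⁻¹ * (ρ⁻¹ * y^2 - x^2)
      else 0 := by
  simp only [uSMat, Matrix.add_apply, Matrix.one_apply,
    Matrix.single, Matrix.of_apply, Fin.ext_iff]
  split_ifs <;> first | ring1 | (exfalso; omega)

lemma uS_upUnip (l : ℕ) (hl : 2 ≤ l) (ρ : F) (x y : F) : upUnip F (uSMat l hl ρ x y) := by
  intro p q hle
  rw [uSMat_apply]
  simp only [Fin.ext_iff]
  split_ifs <;> first | rfl | (exfalso; omega)

lemma uS_det (l : ℕ) (hl : 2 ≤ l) (ρ : F) (x y : F) : (uSMat l hl ρ x y).det = 1 := by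
  have hbt : (uSMat l hl ρ x y).BlockTriangular id := by
    intro p q hlt
    have hlt' : (q:ℕ) < (p:ℕ) := hlt
    rw [uSMat_apply]
    split_ifs <;> first | rfl | (exfalso; omega)
  rw [Matrix.det_of_upperTriangular hbt]
  apply Finset.prod_eq_one
  intro p _
  rw [uSMat_apply]
  split_ifs <;> first | rfl | (exfalso; omega)

set_option maxHeartbeats 1600000 in
lemma psiU_uS (l : ℕ) (hl : 2 ≤ l) (ρ : F) (ψ : AddChar F ℂ) (x y : F) :
    psiU F l ψ (uSMat l hl ρ x y) = ψ ((2:F)⁻¹ * y) := by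
  unfold psiU
  congr 1
  have hpt : ∀ p q : Fin (2*l),
      (if (q:ℕ) = (p:ℕ)+1 ∧ (p:ℕ)+3 ≤ l then uSMat l hl ρ x y p q
       else if (p:ℕ)+2 = l ∧ (q:ℕ) = l then (2:F)⁻¹ * uSMat l hl ρ x y p q else 0)
      = if (⟨l-2, by omega⟩ : Fin (2*l)) = p ∧ (⟨l, by omega⟩ : Fin (2*l)) = q
        then (2:F)⁻¹ * y else 0 := by
    intro p q
    rw [uSMat_apply]
    simp only [Fin.ext_iff]
    split_ifs <;> first | (exfalso; omega) | ring1
  calc (∑ p : Fin (2*l), ∑ q : Fin (2*l),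
        if (q:ℕ) = (p:ℕ)+1 ∧ (p:ℕ)+3 ≤ l then uSMat l hl ρ x y p q
        else if (p:ℕ)+2 = l ∧ (q:ℕ) = l then (2:F)⁻¹ * uSMat l hl ρ x y p q else 0)
      = ∑ p : Fin (2*l), ∑ q : Fin (2*l),
        if (⟨l-2, by omega⟩ : Fin (2*l)) = p ∧ (⟨l, by omega⟩ : Fin (2*l)) = q
        then (2:F)⁻¹ * y else 0 :=
        Finset.sum_congr rfl fun p _ => Finset.sum_congr rfl fun q _ => hpt p q
    _ = (2:F)⁻¹ * y := by simp [ite_and]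

end AuxUS

section AuxUS2

variable {F : Type} [Field F]

set_option maxHeartbeats 1600000 in
lemma uS_orth (l : ℕ) (hl : 2 ≤ l) (ρ : F) (hρ0 : ρ ≠ 0) (h2 : (2:F) ≠ 0) (x y : F) :
    (uSMat l hl ρ x y)ᵀ * Jrho F l ρ * uSMat l hl ρ x y = Jrho F l ρ := by
  have hne : ∀ (u v : ℕ) (hu : u < 2*l) (hv : v < 2*l), u ≠ v →
      (⟨u, hu⟩ : Fin (2*l)) ≠ ⟨v, hv⟩ := by
    intro u v hu hv h hc
    exact h (by simpa [Fin.ext_iff] using hc)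
  have j1 : Jrho F l ρ * Matrix.single (⟨l-2, by omega⟩ : Fin (2*l))
      (⟨l-1, by omega⟩ : Fin (2*l)) x =
      Matrix.single (⟨l+1, by omega⟩ : Fin (2*l)) (⟨l-1, by omega⟩ : Fin (2*l)) x :=
    Jrho_mul_E hl ρ (l-2) (l+1) (by omega) (by omega) (by omega) (by omega) (by omega) _ x
  have j2 : Jrho F l ρ * Matrix.single (⟨l-2, by omega⟩ : Fin (2*l))
      (⟨l, by omega⟩ : Fin (2*l)) y =
      Matrix.single (⟨l+1, by omega⟩ : Fin (2*l)) (⟨l, by omega⟩ : Fin (2*l)) y :=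
    Jrho_mul_E hl ρ (l-2) (l+1) (by omega) (by omega) (by omega) (by omega) (by omega) _ y
  have j3 : Jrho F l ρ * Matrix.single (⟨l-1, by omega⟩ : Fin (2*l))
      (⟨l+1, by omega⟩ : Fin (2*l)) (-x) =
      Matrix.single (⟨l-1, by omega⟩ : Fin (2*l)) (⟨l+1, by omega⟩ : Fin (2*l)) (-x) :=
    Jrho_mul_E_mid1 hl ρ (by omega) _ (-x)
  have j4 : Jrho F l ρ * Matrix.single (⟨l, by omega⟩ : Fin (2*l))
      (⟨l+1, by omega⟩ : Fin (2*l)) (ρ⁻¹ * y) =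
      Matrix.single (⟨l, by omega⟩ : Fin (2*l)) (⟨l+1, by omega⟩ : Fin (2*l)) (-y) := by
    have hc : -(ρ * (ρ⁻¹ * y)) = -y := by field_simp
    rw [Jrho_mul_E_mid2 hl ρ (by omega) _ (ρ⁻¹ * y), hc]
  have j5 : Jrho F l ρ * Matrix.single (⟨l-2, by omega⟩ : Fin (2*l))
      (⟨l+1, by omega⟩ : Fin (2*l)) ((2:F)⁻¹ * (ρ⁻¹ * y^2 - x^2)) =
      Matrix.single (⟨l+1, by omega⟩ : Fin (2*l)) (⟨l+1, by omega⟩ : Fin (2*l))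
        ((2:F)⁻¹ * (ρ⁻¹ * y^2 - x^2)) :=
    Jrho_mul_E hl ρ (l-2) (l+1) (by omega) (by omega) (by omega) (by omega) (by omega) _ _
  have k1 : Matrix.single (⟨l-1, by omega⟩ : Fin (2*l)) (⟨l-2, by omega⟩ : Fin (2*l)) x
      * Jrho F l ρ =
      Matrix.single (⟨l-1, by omega⟩ : Fin (2*l)) (⟨l+1, by omega⟩ : Fin (2*l)) x :=
    E_mul_Jrho hl ρ (l-2) (l+1) (by omega) (by omega) (by omega) (by omega) (by omega) _ x
  have k2 : Matrix.single (⟨l, by omega⟩ : Fin (2*l)) (⟨l-2, by omega⟩ : Fin (2*l)) y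
      * Jrho F l ρ =
      Matrix.single (⟨l, by omega⟩ : Fin (2*l)) (⟨l+1, by omega⟩ : Fin (2*l)) y :=
    E_mul_Jrho hl ρ (l-2) (l+1) (by omega) (by omega) (by omega) (by omega) (by omega) _ y
  have k3 : Matrix.single (⟨l+1, by omega⟩ : Fin (2*l)) (⟨l-1, by omega⟩ : Fin (2*l)) (-x)
      * Jrho F l ρ =
      Matrix.single (⟨l+1, by omega⟩ : Fin (2*l)) (⟨l-1, by omega⟩ : Fin (2*l)) (-x) :=
    E_mul_Jrho_mid1 hl ρ (by omega) _ (-x)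
  have k4 : Matrix.single (⟨l+1, by omega⟩ : Fin (2*l)) (⟨l, by omega⟩ : Fin (2*l))
      (ρ⁻¹ * y) * Jrho F l ρ =
      Matrix.single (⟨l+1, by omega⟩ : Fin (2*l)) (⟨l, by omega⟩ : Fin (2*l)) (-y) := by
    have hc : (ρ⁻¹ * y) * (-ρ) = -y := by field_simp
    rw [E_mul_Jrho_mid2 hl ρ (by omega) _ (ρ⁻¹ * y), hc]
  have k5 : Matrix.single (⟨l+1, by omega⟩ : Fin (2*l)) (⟨l-2, by omega⟩ : Fin (2*l))
      ((2:F)⁻¹ * (ρ⁻¹ * y^2 - x^2)) * Jrho F l ρ =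
      Matrix.single (⟨l+1, by omega⟩ : Fin (2*l)) (⟨l+1, by omega⟩ : Fin (2*l))
        ((2:F)⁻¹ * (ρ⁻¹ * y^2 - x^2)) :=
    E_mul_Jrho hl ρ (l-2) (l+1) (by omega) (by omega) (by omega) (by omega) (by omega) _ _
  have n1 := hne (l+1) (l-2) (by omega) (by omega) (by omega)
  have n2 := hne (l+1) (l-1) (by omega) (by omega) (by omega)
  have n3 := hne (l+1) (l) (by omega) (by omega) (by omega)
  have n4 := hne (l-1) (l-2) (by omega) (by omega) (by omega)
  have n5 := hne (l-1) (l) (by omega) (by omega) (by omega)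
  have n6 := hne (l) (l-2) (by omega) (by omega) (by omega)
  have n7 := hne (l) (l-1) (by omega) (by omega) (by omega)
  have n8 := hne (l-2) (l-1) (by omega) (by omega) (by omega)
  have n9 := hne (l-2) (l) (by omega) (by omega) (by omega)
  have n10 := hne (l-2) (l+1) (by omega) (by omega) (by omega)
  have n11 := hne (l-1) (l+1) (by omega) (by omega) (by omega)
  have n12 := hne (l) (l+1) (by omega) (by omega) (by omega)
  simp only [uSMat, Matrix.transpose_add, Matrix.transpose_one, Et, Matrix.add_mul,
    Matrix.one_mul, Matrix.mul_add, Matrix.mul_one]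
  rw [j1, j2, j3, j4, j5, k1, k2, k3, k4, k5]
  simp only [Matrix.single_mul_single_same, Matrix.single_mul_single_of_ne,
    n1, n2, n3, n4, n5, n6, n7, n8, n9, n10, n11, n12, ne_eq, not_false_iff,
    add_zero, zero_add]
  ext p q
  simp only [Matrix.add_apply, Matrix.single, Matrix.of_apply, Fin.ext_iff]
  split_ifs <;> first | (exfalso; omega) | ring1 | (field_simp; ring1) | field_simp
end AuxUS2

section AuxConj

variable {F : Type} [Field F]

lemma torus_mul_uL (l i₀ : ℕ) (hl : 2 ≤ l) (h3 : i₀ + 3 ≤ l) (ρ : F)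
    (tv : ℕ → Fˣ) (a b : F) (x : F) :
    torusMat F l ρ tv a b * uLMat l i₀ h3 x
      = uLMat l i₀ h3 ((tv i₀ : F) * ((tv (i₀+1) : F))⁻¹ * x) * torusMat F l ρ tv a b := by
  have hz1 : ((tv (i₀+1) : F)) ≠ 0 := Units.ne_zero _
  have hz0 : ((tv i₀ : F)) ≠ 0 := Units.ne_zero _
  have ht1 : torusMat F l ρ tv a b * Matrix.single (⟨i₀, by omega⟩ : Fin (2*l))
      (⟨i₀+1, by omega⟩ : Fin (2*l)) x
      = Matrix.single (⟨i₀, by omega⟩ : Fin (2*l)) (⟨i₀+1, by omega⟩ : Fin (2*l))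
        ((tv i₀ : F) * x) :=
    torus_mul_E_small hl ρ tv a b i₀ (by omega) (by omega) _ x
  have ht2 : torusMat F l ρ tv a b * Matrix.single (⟨2*l-2-i₀, by omega⟩ : Fin (2*l))
      (⟨2*l-1-i₀, by omega⟩ : Fin (2*l)) x
      = Matrix.single (⟨2*l-2-i₀, by omega⟩ : Fin (2*l))
        (⟨2*l-1-i₀, by omega⟩ : Fin (2*l)) (((tv (2*l-1-(2*l-2-i₀)) : F))⁻¹ * x) :=
    torus_mul_E_big hl ρ tv a b (2*l-2-i₀) (by omega) (by omega) _ x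
  rw [show 2*l-1-(2*l-2-i₀) = i₀+1 by omega] at ht2
  have ht3 : Matrix.single (⟨i₀, by omega⟩ : Fin (2*l))
      (⟨i₀+1, by omega⟩ : Fin (2*l)) ((tv i₀ : F) * ((tv (i₀+1) : F))⁻¹ * x)
      * torusMat F l ρ tv a b
      = Matrix.single (⟨i₀, by omega⟩ : Fin (2*l)) (⟨i₀+1, by omega⟩ : Fin (2*l))
        ((tv i₀ : F) * ((tv (i₀+1) : F))⁻¹ * x * (tv (i₀+1) : F)) :=
    E_mul_torus_small hl ρ tv a b (i₀+1) (by omega) (by omega) _ _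
  have ht4 : Matrix.single (⟨2*l-2-i₀, by omega⟩ : Fin (2*l))
      (⟨2*l-1-i₀, by omega⟩ : Fin (2*l)) ((tv i₀ : F) * ((tv (i₀+1) : F))⁻¹ * x)
      * torusMat F l ρ tv a b
      = Matrix.single (⟨2*l-2-i₀, by omega⟩ : Fin (2*l))
        (⟨2*l-1-i₀, by omega⟩ : Fin (2*l))
        ((tv i₀ : F) * ((tv (i₀+1) : F))⁻¹ * x * ((tv (2*l-1-(2*l-1-i₀)) : F))⁻¹) :=
    E_mul_torus_big hl ρ tv a b (2*l-1-i₀) (by omega) (by omega) _ _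
  rw [show 2*l-1-(2*l-1-i₀) = i₀ by omega] at ht4
  simp only [uLMat, Matrix.mul_add, Matrix.mul_sub, Matrix.mul_one, Matrix.add_mul,
    Matrix.sub_mul, Matrix.one_mul]
  have hc3 : (tv i₀ : F) * ((tv (i₀+1) : F))⁻¹ * x * (tv (i₀+1) : F) = (tv i₀ : F) * x := by
    field_simp
  have hc4 : (tv i₀ : F) * ((tv (i₀+1) : F))⁻¹ * x * ((tv i₀ : F))⁻¹
      = ((tv (i₀+1) : F))⁻¹ * x := by
    field_simp
  rw [ht1, ht2, ht3, ht4, hc3, hc4]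

set_option maxHeartbeats 3200000 in
lemma torus_mul_uS (l : ℕ) (hl : 2 ≤ l) (ρ : F) (hρ0 : ρ ≠ 0) (h2 : (2:F) ≠ 0)
    (tv : ℕ → Fˣ) (a b : F) (hab : a^2 - b^2*ρ = 1) (x y : F) :
    torusMat F l ρ tv a b * uSMat l hl ρ x y
      = uSMat l hl ρ ((tv (l-2) : F) * (a*x - b*y)) ((tv (l-2) : F) * (a*y - b*ρ*x))
        * torusMat F l ρ tv a b := by
  have hz0 : ((tv (l-2) : F)) ≠ 0 := Units.ne_zero _
  have hcc : (tv (l-2) : F) * ((tv (l-2) : F))⁻¹ = 1 := mul_inv_cancel₀ hz0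
  have hρ1 : ρ * ρ⁻¹ = 1 := mul_inv_cancel₀ hρ0
  have t1 : torusMat F l ρ tv a b * Matrix.single (⟨l-2, by omega⟩ : Fin (2*l))
      (⟨l-1, by omega⟩ : Fin (2*l)) x
      = Matrix.single (⟨l-2, by omega⟩ : Fin (2*l)) (⟨l-1, by omega⟩ : Fin (2*l))
        ((tv (l-2) : F) * x) :=
    torus_mul_E_small hl ρ tv a b (l-2) (by omega) (by omega) _ x
  have t2 : torusMat F l ρ tv a b * Matrix.single (⟨l-2, by omega⟩ : Fin (2*l))
      (⟨l, by omega⟩ : Fin (2*l)) y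
      = Matrix.single (⟨l-2, by omega⟩ : Fin (2*l)) (⟨l, by omega⟩ : Fin (2*l))
        ((tv (l-2) : F) * y) :=
    torus_mul_E_small hl ρ tv a b (l-2) (by omega) (by omega) _ y
  have t3 : torusMat F l ρ tv a b * Matrix.single (⟨l-1, by omega⟩ : Fin (2*l))
      (⟨l+1, by omega⟩ : Fin (2*l)) (-x)
      = Matrix.single (⟨l-1, by omega⟩ : Fin (2*l)) (⟨l+1, by omega⟩ : Fin (2*l))
          (a * (-x))
        + Matrix.single (⟨l, by omega⟩ : Fin (2*l)) (⟨l+1, by omega⟩ : Fin (2*l))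
          (b * (-x)) :=
    torus_mul_E_m1 hl ρ tv a b (by omega) (by omega) _ (-x)
  have t4 : torusMat F l ρ tv a b * Matrix.single (⟨l, by omega⟩ : Fin (2*l))
      (⟨l+1, by omega⟩ : Fin (2*l)) (ρ⁻¹ * y)
      = Matrix.single (⟨l-1, by omega⟩ : Fin (2*l)) (⟨l+1, by omega⟩ : Fin (2*l))
          (b * ρ * (ρ⁻¹ * y))
        + Matrix.single (⟨l, by omega⟩ : Fin (2*l)) (⟨l+1, by omega⟩ : Fin (2*l))
          (a * (ρ⁻¹ * y)) :=
    torus_mul_E_m2 hl ρ tv a b (by omega) (by omega) _ (ρ⁻¹ * y)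
  have t5 : torusMat F l ρ tv a b * Matrix.single (⟨l-2, by omega⟩ : Fin (2*l))
      (⟨l+1, by omega⟩ : Fin (2*l)) ((2:F)⁻¹ * (ρ⁻¹ * y^2 - x^2))
      = Matrix.single (⟨l-2, by omega⟩ : Fin (2*l)) (⟨l+1, by omega⟩ : Fin (2*l))
        ((tv (l-2) : F) * ((2:F)⁻¹ * (ρ⁻¹ * y^2 - x^2))) :=
    torus_mul_E_small hl ρ tv a b (l-2) (by omega) (by omega) _ _
  have s1 : Matrix.single (⟨l-2, by omega⟩ : Fin (2*l)) (⟨l-1, by omega⟩ : Fin (2*l))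
      ((tv (l-2) : F) * (a*x - b*y)) * torusMat F l ρ tv a b
      = Matrix.single (⟨l-2, by omega⟩ : Fin (2*l)) (⟨l-1, by omega⟩ : Fin (2*l))
          ((tv (l-2) : F) * (a*x - b*y) * a)
        + Matrix.single (⟨l-2, by omega⟩ : Fin (2*l)) (⟨l, by omega⟩ : Fin (2*l))
          ((tv (l-2) : F) * (a*x - b*y) * (b * ρ)) :=
    E_mul_torus_m1 hl ρ tv a b (by omega) (by omega) _ _
  have s2 : Matrix.single (⟨l-2, by omega⟩ : Fin (2*l)) (⟨l, by omega⟩ : Fin (2*l))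
      ((tv (l-2) : F) * (a*y - b*ρ*x)) * torusMat F l ρ tv a b
      = Matrix.single (⟨l-2, by omega⟩ : Fin (2*l)) (⟨l-1, by omega⟩ : Fin (2*l))
          ((tv (l-2) : F) * (a*y - b*ρ*x) * b)
        + Matrix.single (⟨l-2, by omega⟩ : Fin (2*l)) (⟨l, by omega⟩ : Fin (2*l))
          ((tv (l-2) : F) * (a*y - b*ρ*x) * a) :=
    E_mul_torus_m2 hl ρ tv a b (by omega) (by omega) _ _
  have s3 : Matrix.single (⟨l-1, by omega⟩ : Fin (2*l)) (⟨l+1, by omega⟩ : Fin (2*l))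
      (-((tv (l-2) : F) * (a*x - b*y))) * torusMat F l ρ tv a b
      = Matrix.single (⟨l-1, by omega⟩ : Fin (2*l)) (⟨l+1, by omega⟩ : Fin (2*l))
        (-((tv (l-2) : F) * (a*x - b*y)) * ((tv (2*l-1-(l+1)) : F))⁻¹) :=
    E_mul_torus_big hl ρ tv a b (l+1) (by omega) (by omega) _ _
  rw [show 2*l-1-(l+1) = l-2 by omega] at s3
  have s4 : Matrix.single (⟨l, by omega⟩ : Fin (2*l)) (⟨l+1, by omega⟩ : Fin (2*l))
      (ρ⁻¹ * ((tv (l-2) : F) * (a*y - b*ρ*x))) * torusMat F l ρ tv a b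
      = Matrix.single (⟨l, by omega⟩ : Fin (2*l)) (⟨l+1, by omega⟩ : Fin (2*l))
        (ρ⁻¹ * ((tv (l-2) : F) * (a*y - b*ρ*x)) * ((tv (2*l-1-(l+1)) : F))⁻¹) :=
    E_mul_torus_big hl ρ tv a b (l+1) (by omega) (by omega) _ _
  rw [show 2*l-1-(l+1) = l-2 by omega] at s4
  have s5 : Matrix.single (⟨l-2, by omega⟩ : Fin (2*l)) (⟨l+1, by omega⟩ : Fin (2*l))
      ((2:F)⁻¹ * (ρ⁻¹ * ((tv (l-2) : F) * (a*y - b*ρ*x))^2 - ((tv (l-2) : F) * (a*x - b*y))^2))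
      * torusMat F l ρ tv a b
      = Matrix.single (⟨l-2, by omega⟩ : Fin (2*l)) (⟨l+1, by omega⟩ : Fin (2*l))
        ((2:F)⁻¹ * (ρ⁻¹ * ((tv (l-2) : F) * (a*y - b*ρ*x))^2 - ((tv (l-2) : F) * (a*x - b*y))^2)
          * ((tv (2*l-1-(l+1)) : F))⁻¹) :=
    E_mul_torus_big hl ρ tv a b (l+1) (by omega) (by omega) _ _
  rw [show 2*l-1-(l+1) = l-2 by omega] at s5
  simp only [uSMat, Matrix.mul_add, Matrix.mul_one, Matrix.add_mul, Matrix.one_mul]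
  rw [t1, t2, t3, t4, t5, s1, s2, s3, s4, s5]
  ext p q
  simp only [Matrix.add_apply, Matrix.single, Matrix.of_apply, Fin.ext_iff]
  split_ifs <;>
    first
      | (exfalso; omega)
      | ring1
      | linear_combination (-((tv (l-2) : F) * x)) * hab
      | linear_combination (-((tv (l-2) : F) * y)) * hab
      | linear_combination (b*y) * hρ1 + (a*x-b*y) * hcc
      | linear_combination (b*x) * hρ1 - (ρ⁻¹*(a*y-b*ρ*x)) * hcc
      | linear_combination ((2:F)⁻¹*(tv (l-2) : F)*(x^2 - ρ⁻¹*y^2)) * hab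
          - ((2:F)⁻¹*(tv (l-2) : F)*(b^2*y^2 + b^2*ρ*x^2 - 2*a*b*x*y)) * hρ1
          - ((2:F)⁻¹*(tv (l-2) : F)*(ρ⁻¹*(a*y-b*ρ*x)^2 - (a*x-b*y)^2)) * hcc

end AuxConj

section AuxGroup

variable {F : Type} [Field F]

/-- Build an element of `SO2l` from a matrix satisfying the two conditions. -/
noncomputable def mkSO (l : ℕ) (ρ : F) (M : Matrix (Fin (2*l)) (Fin (2*l)) F)
    (h1 : M.det = 1) (h2 : Mᵀ * Jrho F l ρ * M = Jrho F l ρ) : SO2l F l ρ :=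
  ⟨Matrix.nonsingInvUnit M (by rw [h1]; exact isUnit_one), by exact ⟨h1, h2⟩⟩

lemma mat_mkSO (l : ℕ) (ρ : F) (M : Matrix (Fin (2*l)) (Fin (2*l)) F)
    (h1 : M.det = 1) (h2 : Mᵀ * Jrho F l ρ * M = Jrho F l ρ) :
    mat F (mkSO l ρ M h1 h2) = M := rfl

lemma psiU_conj_eq (l : ℕ) (ρ : F) (ψ : AddChar F ℂ)
    {V : Type} [AddCommGroup V] [Module ℂ V]
    (π : Representation ℂ (SO2l F l ρ) V) (Γ : V →ₗ[ℂ] ℂ) (v₀ : V)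
    (hΓ : IsWhittaker F l ρ ψ π Γ) (hv₀ : IsWhitVec F l ρ ψ π Γ v₀)
    (t u u' : SO2l F l ρ) (hu : u ∈ USet F l ρ) (hu' : u' ∈ USet F l ρ)
    (hcomm : t * u = u' * t) (hΓt : Γ (π t v₀) ≠ 0) :
    psiU F l ψ (mat F u) = psiU F l ψ (mat F u') := by
  have h1 : Γ (π (t * u) v₀) = psiU F l ψ (mat F u) * Γ (π t v₀) := by
    rw [_root_.map_mul]
    show Γ (π t (π u v₀)) = _
    rw [hv₀.2 u hu, _root_.map_smul, _root_.map_smul, smul_eq_mul]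
  have h2 : Γ (π (u' * t) v₀) = psiU F l ψ (mat F u') * Γ (π t v₀) := by
    rw [_root_.map_mul]
    show Γ (π u' (π t v₀)) = _
    exact hΓ.2 u' hu' _
  rw [hcomm] at h1
  exact mul_right_cancel₀ hΓt (h1.symm.trans h2)

end AuxGroup

section AuxGroup2

variable {F : Type} [Field F]

lemma psiU_conj_eq' (l : ℕ) (ρ : F) (ψ : AddChar F ℂ)
    {V : Type} [AddCommGroup V] [Module ℂ V]
    (π : Representation ℂ (SO2l F l ρ) V) (Γ : V →ₗ[ℂ] ℂ) (v₀ : V)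
    (hΓ : IsWhittaker F l ρ ψ π Γ) (hv₀ : IsWhitVec F l ρ ψ π Γ v₀)
    (t : SO2l F l ρ) (hΓt : Γ (π t v₀) ≠ 0)
    (M M' : Matrix (Fin (2*l)) (Fin (2*l)) F)
    (d1 : M.det = 1) (o1 : Mᵀ * Jrho F l ρ * M = Jrho F l ρ)
    (d2 : M'.det = 1) (o2 : M'ᵀ * Jrho F l ρ * M' = Jrho F l ρ)
    (hup : upUnip F M) (hup' : upUnip F M')
    (h : mat F t * M = M' * mat F t) :
    psiU F l ψ M = psiU F l ψ M' := by
  have hmem : mkSO l ρ M d1 o1 ∈ USet F l ρ := by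
    show upUnip F (mat F (mkSO l ρ M d1 o1))
    rw [mat_mkSO]
    exact hup
  have hmem' : mkSO l ρ M' d2 o2 ∈ USet F l ρ := by
    show upUnip F (mat F (mkSO l ρ M' d2 o2))
    rw [mat_mkSO]
    exact hup'
  have hcomm : t * mkSO l ρ M d1 o1 = mkSO l ρ M' d2 o2 * t := by
    apply Subtype.ext
    apply Units.ext
    exact h
  have := psiU_conj_eq l ρ ψ π Γ v₀ hΓ hv₀ t (mkSO l ρ M d1 o1) (mkSO l ρ M' d2 o2)
    hmem hmem' hcomm hΓt
  rwa [mat_mkSO, mat_mkSO] at this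

end AuxGroup2


theorem bessel_torus_support_center
    (F : Type) [Field F] [Fintype F] (p r : ℕ) (hp : p.Prime) (hp2 : p ≠ 2)
    (hr : 0 < r) (hcard : Fintype.card F = p ^ r)
    (ψ : AddChar F ℂ) (hψ : ψ ≠ 1)
    (l : ℕ) (hl : 2 ≤ l) (ρ : F) (hρ : ∀ x : F, x ^ 2 ≠ ρ)
    (V : Type) [AddCommGroup V] [Module ℂ V]
    (π : Representation ℂ (SO2l F l ρ) V)
    (hπirr : IsIrrep π)
    (Γ : V →ₗ[ℂ] ℂ) (hΓ : IsWhittaker F l ρ ψ π Γ)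
    (v₀ : V) (hv₀ : IsWhitVec F l ρ ψ π Γ v₀)
    (t : SO2l F l ρ) (ht : t ∈ TSet F l ρ)
    (hB : Bessel F l ρ π Γ v₀ t ≠ 0) :
    mat F t = 1 ∨ mat F t = -1 := by
  obtain ⟨tv, a, b, hab, htmat⟩ := ht
  have h2F : (2 : F) ≠ 0 := two_ne_zero_of_card p r hp hp2 hr hcard
  have hρ0 : ρ ≠ 0 := by
    intro h
    exact hρ 0 (by rw [h]; norm_num)
  have hΓt : Γ (π t v₀) ≠ 0 := by
    intro h
    apply hB
    unfold Bessel
    rw [h, zero_div]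
  have hc0 : ((tv (l-2) : F)) ≠ 0 := Units.ne_zero _
  -- Step 1: short-root relation
  have hshort : ∀ x y : F, ψ ((2:F)⁻¹ * y)
      = ψ ((2:F)⁻¹ * ((tv (l-2) : F) * (a*y - b*ρ*x))) := by
    intro x y
    have hkey := psiU_conj_eq' l ρ ψ π Γ v₀ hΓ hv₀ t hΓt
      (uSMat l hl ρ x y)
      (uSMat l hl ρ ((tv (l-2) : F) * (a*x - b*y)) ((tv (l-2) : F) * (a*y - b*ρ*x)))
      (uS_det l hl ρ x y) (uS_orth l hl ρ hρ0 h2F x y)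
      (uS_det l hl ρ _ _) (uS_orth l hl ρ hρ0 h2F _ _)
      (uS_upUnip l hl ρ x y) (uS_upUnip l hl ρ _ _)
      (by rw [htmat]; exact torus_mul_uS l hl ρ hρ0 h2F tv a b hab x y)
    rw [psiU_uS, psiU_uS] at hkey
    exact hkey
  -- Step 2: b = 0
  have hb0 : b = 0 := by
    have hk : ∀ x : F, ψ ((-((2:F)⁻¹ * (tv (l-2) : F) * b * ρ)) * x) = 1 := by
      intro x
      have h0 := (hshort x 0).symm
      rw [show ((2:F)⁻¹ * ((tv (l-2) : F) * (a*0 - b*ρ*x)))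
          = (-((2:F)⁻¹ * (tv (l-2) : F) * b * ρ)) * x from by ring, mul_zero,
        AddChar.map_zero_eq_one] at h0
      exact h0
    have hd := psi_kill ψ hψ _ hk
    have h2inv : ((2:F)⁻¹) ≠ 0 := inv_ne_zero h2F
    rcases mul_eq_zero.mp (neg_eq_zero.mp hd) with h | h
    · rcases mul_eq_zero.mp h with h' | h'
      · rcases mul_eq_zero.mp h' with h'' | h''
        · exact absurd h'' h2inv
        · exact absurd h'' hc0
      · exact h'
    · exact absurd h hρ0
  subst hb0
  -- Step 3: tv (l-2) * a = 1
  have hca : (tv (l-2) : F) * a = 1 := by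
    apply psi_scale ψ hψ
    intro z
    have h0 := (hshort 0 (2*z)).symm
    rw [show ((2:F)⁻¹ * ((tv (l-2) : F) * (a*(2*z) - 0*ρ*0)))
        = ((tv (l-2) : F) * a) * z from by field_simp; ring] at h0
    rw [show ((2:F)⁻¹ * (2*z)) = z from by field_simp] at h0
    exact h0
  have haa : a * a = 1 := by
    have : a^2 = 1 := by linear_combination hab
    rw [← pow_two]
    exact this
  have hc0a : (tv (l-2) : F) = a := by
    linear_combination a * hca - (tv (l-2) : F) * haa
  -- Step 4: long-root relations and the chain
  have hlong : ∀ i₀, i₀ + 3 ≤ l → (tv i₀ : F) = (tv (i₀+1) : F) := by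
    intro i₀ h3
    have hscale : ∀ x : F, ψ (((tv i₀ : F) * ((tv (i₀+1) : F))⁻¹) * x) = ψ x := by
      intro x
      have hkey := psiU_conj_eq' l ρ ψ π Γ v₀ hΓ hv₀ t hΓt
        (uLMat l i₀ h3 x)
        (uLMat l i₀ h3 ((tv i₀ : F) * ((tv (i₀+1) : F))⁻¹ * x))
        (uL_det l i₀ h3 x) (uL_orth l i₀ hl h3 ρ x)
        (uL_det l i₀ h3 _) (uL_orth l i₀ hl h3 ρ _)
        (uL_upUnip l i₀ h3 x) (uL_upUnip l i₀ h3 _)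
        (by rw [htmat]; exact torus_mul_uL l i₀ hl h3 ρ tv a 0 x)
      rw [psiU_uL l i₀ hl h3, psiU_uL l i₀ hl h3] at hkey
      exact hkey.symm
    have he := psi_scale ψ hψ _ hscale
    have hvv : ((tv (i₀+1) : F))⁻¹ * (tv (i₀+1) : F) = 1 :=
      inv_mul_cancel₀ (Units.ne_zero _)
    linear_combination (tv (i₀+1) : F) * he - (tv i₀ : F) * hvv
  have htveq : ∀ k, k ≤ l - 2 → (tv k : F) = a := by
    have hchain : ∀ d k, k + d = l - 2 → (tv k : F) = a := by
      intro d
      induction d with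
      | zero =>
        intro k hk
        rw [show k = l - 2 by omega]
        exact hc0a
      | succ d ih =>
        intro k hk
        rw [hlong k (by omega)]
        exact ih (k+1) (by omega)
    intro k hk
    exact hchain (l-2-k) k (by omega)
  -- Step 5: identify the matrix
  have hainv : a⁻¹ = a := by
    rw [inv_eq_of_mul_eq_one_right haa]
  have hval : ∀ p q : Fin (2*l), torusMat F l ρ tv a 0 p q = if p = q then a else 0 := by
    intro p q
    obtain ⟨qv, hqv⟩ := q
    rcases lt_or_ge qv (l-1) with hq1 | hq1
    · rw [torus_col_small hl ρ tv a 0 qv hq1 hqv p, htveq qv (by omega)]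
      simp only [Fin.ext_iff]
    · rcases eq_or_lt_of_le hq1 with hq2 | hq2
      · rw [show (⟨qv, hqv⟩ : Fin (2*l)) = ⟨l-1, by omega⟩ from Fin.ext (by simp; omega)]
        rw [torus_col_m1 hl ρ tv a 0 (by omega) p]
        simp only [Fin.ext_iff]
        split_ifs <;> first | rfl | (exfalso; omega) | ring1
      · rcases eq_or_lt_of_le (Nat.succ_le_of_lt hq2) with hq3 | hq3
        · rw [show (⟨qv, hqv⟩ : Fin (2*l)) = ⟨l, by omega⟩ from Fin.ext (by simp; omega)]
          rw [torus_col_m2 hl ρ tv a 0 (by omega) p]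
          simp only [Fin.ext_iff]
          split_ifs <;> first | rfl | (exfalso; omega) | ring1
        · rw [torus_col_big hl ρ tv a 0 qv (by omega) hqv p,
            htveq (2*l-1-qv) (by omega), hainv]
          simp only [Fin.ext_iff]
  rcases mul_self_eq_one_iff.mp haa with ha1 | ham1
  · left
    rw [htmat]
    ext p q
    rw [hval p q, Matrix.one_apply, ha1]
  · right
    rw [htmat]
    ext p q
    rw [hval p q, Matrix.neg_apply, Matrix.one_apply, ham1]
    split_ifs <;> ring1


end ConverseSO
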